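/- arXiv:cs/0206012 — 2 statements merged into one kernel-verified Lean document; each statement's English description precedes it below -/
import Mathlib

section
/- When the lean-consensus algorithm is run in a hybrid-scheduled uniprocessor system with a quantum of at least 8 operations, every process decides after executing at most 12 operations (i.e., within 3 rounds). -/
/-- Local state of a process executing the lean-consensus algorithm.  `pc ∈ {0,1,2,3}`
is the index of the next operation within the current round: `0` = read `a_0[r]`,
`1` = read `a_1[r]`, `2` = write `1` to `a_p[r]`, `3` = read `a_{1-p}[r-1]` (deciding `p`
if it is `0`).  `pref` is the current preference, `round` the current round number,
`firstRead` the value read from `a_0[r]` at `pc = 0`, and `decided` records the decision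
value once the process has decided (after which it takes no further steps). -/
structure ProcState where
  pc : ℕ
  pref : Bool
  round : ℕ
  firstRead : Bool
  decided : Option Bool
  deriving DecidableEq

/-- A global configuration of the lean-consensus algorithm: the contents of the two
register arrays (`reg b r` is the register `a_b[r]`, where bit `false` stands for `0` and
`true` for `1`) together with the local state of each of the `N` processes. -/
structure Config (N : ℕ) where
  reg : Bool → ℕ → Bool
  proc : Fin N → ProcState

/-- The initial configuration: `a_0[0] = a_1[0] = 1`, all other registers `0`, and every
process at the first operation of round `1`, preferring its input bit. -/
def initConfig (N : ℕ) (input : Fin N → Bool) : Config N where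
  reg := fun _ r => r == 0
  proc := fun i => ⟨0, input i, 1, false, none⟩

/-- One atomic operation of a single process of the lean-consensus algorithm: given the
current register contents and the process's local state, return its new local state
together with `some (b, r)` if the operation writes `1` to register `a_b[r]` (and `none`
for a read).  A decided process does nothing. -/
def procStep (reg : Bool → ℕ → Bool) (s : ProcState) : ProcState × Option (Bool × ℕ) :=
  if s.decided ≠ none then (s, none)
  else if s.pc = 0 then ({ s with pc := 1, firstRead := reg false s.round }, none)
  else if s.pc = 1 then
    let v0 := s.firstRead
    let v1 := reg true s.round
    let p := if v0 = true ∧ v1 = false then false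
             else if v1 = true ∧ v0 = false then true
             else s.pref
    ({ s with pc := 2, pref := p }, none)
  else if s.pc = 2 then ({ s with pc := 3 }, some (s.pref, s.round))
  else if reg (!s.pref) (s.round - 1) = false then
    ({ s with decided := some s.pref }, none)
  else ({ s with pc := 0, round := s.round + 1 }, none)

/-- The global transition: process `i` performs its next atomic operation (interleaving
semantics). -/
def step {N : ℕ} (c : Config N) (i : Fin N) : Config N :=
  let r := procStep c.reg (c.proc i)
  { reg := fun b k => match r.2 with
      | some w => if b = w.1 ∧ k = w.2 then true else c.reg b k
      | none => c.reg b k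
    proc := Function.update c.proc i r.1 }

/-- `run input sched t` is the configuration reached after the first `t` steps of the
execution of lean-consensus from inputs `input` in which the process `sched s` performs
the `s`-th atomic operation. -/
def run {N : ℕ} (input : Fin N → Bool) (sched : ℕ → Fin N) : ℕ → Config N
  | 0 => initConfig N input
  | t + 1 => step (run input sched t) (sched t)

/-- `segLen sched t` is the number of consecutive steps up to and including step `t` that
have been performed by the process `sched t` (the length of the current run segment of
the uniprocessor schedule). -/
def segLen {N : ℕ} (sched : ℕ → Fin N) : ℕ → ℕ
  | 0 => 1
  | t + 1 => if sched (t + 1) = sched t then segLen sched t + 1 else 1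

/-- `HybridSchedule input sched prio Q q0` says that the uniprocessor schedule `sched`
obeys hybrid quantum/priority-based scheduling for the execution of lean-consensus from
inputs `input`: whenever the running process is pre-empted (another process is scheduled
while it still has operations remaining, i.e. it is undecided), the pre-empting process
has strictly higher priority, or it has equal priority and the pre-empted process has
completed its quantum — `Q` consecutive operations since it was scheduled, except that
the process running at time `0` may have consumed part of its quantum on other work
before starting the protocol and is vulnerable already after `q0 ≤ Q` consecutive
operations. -/
def HybridSchedule {N : ℕ} (input : Fin N → Bool) (sched : ℕ → Fin N)
    (prio : Fin N → ℕ) (Q q0 : ℕ) : Prop :=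
  ∀ t : ℕ, sched (t + 1) ≠ sched t →
    ((run input sched (t + 1)).proc (sched t)).decided = none →
    (prio (sched t) < prio (sched (t + 1)) ∨
      (prio (sched t) = prio (sched (t + 1)) ∧
        (if t + 1 = segLen sched t then q0 else Q) ≤ segLen sched t))


/-! ### Auxiliary development -/

namespace LC

theorem procStep_of_decided {reg : Bool → ℕ → Bool} {s : ProcState} (h : s.decided ≠ none) :
    procStep reg s = (s, none) := by
  simp [procStep, h]

theorem procStep_pc0 {reg : Bool → ℕ → Bool} {s : ProcState} (h : s.decided = none)
    (h0 : s.pc = 0) :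
    procStep reg s = ({ s with pc := 1, firstRead := reg false s.round }, none) := by
  simp [procStep, h, h0]

theorem procStep_pc1 {reg : Bool → ℕ → Bool} {s : ProcState} (h : s.decided = none)
    (h1 : s.pc = 1) :
    procStep reg s = ({ s with pc := 2, pref := if s.firstRead = true ∧ reg true s.round = false then false else if reg true s.round = true ∧ s.firstRead = false then true else s.pref }, none) := by
  simp [procStep, h, h1]

theorem procStep_pc2 {reg : Bool → ℕ → Bool} {s : ProcState} (h : s.decided = none)
    (h2 : s.pc = 2) :
    procStep reg s = ({ s with pc := 3 }, some (s.pref, s.round)) := by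
  simp [procStep, h, h2]

theorem procStep_pc3_dec {reg : Bool → ℕ → Bool} {s : ProcState} (h : s.decided = none)
    (h3 : s.pc = 3) (hr : reg (!s.pref) (s.round - 1) = false) :
    procStep reg s = ({ s with decided := some s.pref }, none) := by
  simp [procStep, h, h3, hr]

theorem procStep_pc3_adv {reg : Bool → ℕ → Bool} {s : ProcState} (h : s.decided = none)
    (h3 : s.pc = 3) (hr : reg (!s.pref) (s.round - 1) = true) :
    procStep reg s = ({ s with pc := 0, round := s.round + 1 }, none) := by
  simp [procStep, h, h3, hr]

theorem procStep_snd (reg : Bool → ℕ → Bool) (s : ProcState) :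
    (procStep reg s).2 = if s.decided = none ∧ s.pc = 2 then some (s.pref, s.round)
      else none := by
  unfold procStep
  split_ifs with h1 h2 h3 h4 h5 h6 h7 <;> simp_all

variable {N : ℕ}

theorem step_proc_self (c : Config N) (j : Fin N) :
    (step c j).proc j = (procStep c.reg (c.proc j)).1 := by
  simp [step]

theorem step_proc_ne (c : Config N) {i j : Fin N} (h : j ≠ i) :
    (step c i).proc j = c.proc j := by
  simp [step, Function.update_of_ne h]

theorem step_reg_none (c : Config N) (j : Fin N)
    (h : (procStep c.reg (c.proc j)).2 = none) :
    (step c j).reg = c.reg := by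
  funext b k
  simp [step, h]

theorem step_reg_iff (c : Config N) (j : Fin N) (b : Bool) (k : ℕ) :
    (step c j).reg b k = true ↔
      (c.reg b k = true ∨ ((c.proc j).decided = none ∧ (c.proc j).pc = 2 ∧
        b = (c.proc j).pref ∧ k = (c.proc j).round)) := by
  by_cases h : (c.proc j).decided = none ∧ (c.proc j).pc = 2
  · have hsnd : (procStep c.reg (c.proc j)).2 = some ((c.proc j).pref, (c.proc j).round) := by
      rw [procStep_snd, if_pos h]
    show (match (procStep c.reg (c.proc j)).2 with
      | some w => if b = w.1 ∧ k = w.2 then true else c.reg b k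
      | none => c.reg b k) = true ↔ _
    rw [hsnd]
    by_cases hb : b = (c.proc j).pref ∧ k = (c.proc j).round
    · simp [hb, h]
    · simp only [if_neg hb]
      constructor
      · exact fun hr => Or.inl hr
      · rintro (hr | ⟨_, _, hb1, hb2⟩)
        · exact hr
        · exact absurd ⟨hb1, hb2⟩ hb
  · have hsnd : (procStep c.reg (c.proc j)).2 = none := by
      rw [procStep_snd, if_neg h]
    show (match (procStep c.reg (c.proc j)).2 with
      | some w => if b = w.1 ∧ k = w.2 then true else c.reg b k
      | none => c.reg b k) = true ↔ _
    rw [hsnd]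
    constructor
    · exact fun hr => Or.inl hr
    · rintro (hr | ⟨h1, h2, _, _⟩)
      · exact hr
      · exact absurd ⟨h1, h2⟩ h

theorem step_reg_mono (c : Config N) (j : Fin N) {b : Bool} {k : ℕ}
    (h : c.reg b k = true) : (step c j).reg b k = true :=
  (step_reg_iff c j b k).2 (Or.inl h)

section Run

variable (input : Fin N → Bool) (sched : ℕ → Fin N)

theorem run_succ (t : ℕ) :
    run input sched (t + 1) = step (run input sched t) (sched t) := rfl

/-- `WAt s b r`: at time `s` the scheduled process performs the write of `1` to `a_b[r]`. -/
def WAt (s : ℕ) (b : Bool) (r : ℕ) : Prop :=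
  ((run input sched s).proc (sched s)).decided = none ∧
  ((run input sched s).proc (sched s)).pc = 2 ∧
  ((run input sched s).proc (sched s)).round = r ∧
  ((run input sched s).proc (sched s)).pref = b

/-- number of steps taken by process `j` before time `t`. -/
def cnt (j : Fin N) (t : ℕ) : ℕ := ((Finset.range t).filter fun s => sched s = j).card

theorem reg_zero (b : Bool) (t : ℕ) : (run input sched t).reg b 0 = true := by
  induction t with
  | zero => simp [run, initConfig]
  | succ t ih => exact step_reg_mono _ _ ih

theorem reg_mono {b : Bool} {r : ℕ} {t t' : ℕ} (h : t ≤ t')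
    (hr : (run input sched t).reg b r = true) : (run input sched t').reg b r = true := by
  induction h with
  | refl => exact hr
  | step _ ih => exact step_reg_mono _ _ ih

theorem reg_iff {r : ℕ} (hr : r ≠ 0) (b : Bool) (t : ℕ) :
    (run input sched t).reg b r = true ↔ ∃ s, s < t ∧ WAt input sched s b r := by
  induction t with
  | zero =>
    simp only [run, initConfig]
    constructor
    · intro h; exact absurd (by simpa using h) hr
    · rintro ⟨s, hs, _⟩; omega
  | succ t ih =>
    rw [run_succ, step_reg_iff, ih]
    constructor
    · rintro (⟨s, hs, hW⟩ | ⟨h1, h2, h3, h4⟩)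
      · exact ⟨s, by omega, hW⟩
      · exact ⟨t, by omega, h1, h2, h4.symm, h3.symm⟩
    · rintro ⟨s, hs, hW⟩
      rcases Nat.lt_or_ge s t with hlt | hge
      · exact Or.inl ⟨s, hlt, hW⟩
      · have hst : s = t := by omega
        subst hst
        exact Or.inr ⟨hW.1, hW.2.1, hW.2.2.2.symm, hW.2.2.1.symm⟩

/-- The main per-process invariant. -/
def InvAt (c : Config N) (j : Fin N) : Prop :=
  1 ≤ (c.proc j).round ∧ (c.proc j).pc ≤ 3 ∧
  ((c.proc j).decided = none → (c.proc j).pc = 1 → (c.proc j).firstRead = true →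
    c.reg false (c.proc j).round = true) ∧
  ((c.proc j).decided = none → 2 ≤ (c.proc j).round → (c.proc j).pc ≤ 1 →
    c.reg (c.proc j).pref ((c.proc j).round - 1) = true) ∧
  ((c.proc j).decided = none → (c.proc j).pc = 2 → 2 ≤ (c.proc j).round →
    (c.reg (c.proc j).pref ((c.proc j).round - 1) = true ∨
      c.reg (c.proc j).pref ((c.proc j).round) = true)) ∧
  ((c.proc j).decided = none → (c.proc j).pc = 3 →
    c.reg (c.proc j).pref ((c.proc j).round) = true) ∧
  ((c.proc j).decided = none → 11 ≤ 4 * (c.proc j).round + (c.proc j).pc →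
    (c.reg false 2 = true ∨ c.reg true 2 = true)) ∧
  ((c.proc j).decided ≠ none → (c.reg false 2 = true ∨ c.reg true 2 = true))

theorem inv (t : ℕ) (j : Fin N) : InvAt (run input sched t) j := by
  induction t with
  | zero => simp [InvAt, run, initConfig]
  | succ t ih =>
    obtain ⟨h1, h2, ha, hb, hc, hd, he, hf⟩ := ih
    by_cases hj : j = sched t
    case neg =>
      unfold InvAt
      rw [run_succ, step_proc_ne _ hj]
      exact ⟨h1, h2,
        fun d p f => step_reg_mono _ _ (ha d p f),
        fun d r p => step_reg_mono _ _ (hb d r p),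
        fun d p r => (hc d p r).imp (step_reg_mono _ _) (step_reg_mono _ _),
        fun d p => step_reg_mono _ _ (hd d p),
        fun d p => (he d p).imp (step_reg_mono _ _) (step_reg_mono _ _),
        fun d => (hf d).imp (step_reg_mono _ _) (step_reg_mono _ _)⟩
    case pos =>
      subst hj
      by_cases hdec : ((run input sched t).proc (sched t)).decided = none
      case neg =>
        unfold InvAt
        rw [run_succ, step_proc_self, procStep_of_decided hdec]
        have hrg : (step (run input sched t) (sched t)).reg = (run input sched t).reg :=
          step_reg_none _ _ (by rw [procStep_of_decided hdec])
        rw [hrg]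
        dsimp only
        exact ⟨h1, h2, fun d => absurd d hdec, fun d _ => absurd d hdec,
          fun d => absurd d hdec, fun d => absurd d hdec, fun d => absurd d hdec,
          fun _ => hf hdec⟩
      case pos =>
        have hpcs : ((run input sched t).proc (sched t)).pc = 0 ∨
            ((run input sched t).proc (sched t)).pc = 1 ∨
            ((run input sched t).proc (sched t)).pc = 2 ∨
            ((run input sched t).proc (sched t)).pc = 3 := by omega
        rcases hpcs with hp | hp | hp | hp
        · -- pc = 0
          have hps := procStep_pc0 (reg := (run input sched t).reg) hdec hp
          have hrg : (step (run input sched t) (sched t)).reg = (run input sched t).reg :=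
            step_reg_none _ _ (by rw [hps])
          unfold InvAt
          rw [run_succ, step_proc_self, hps, hrg]
          dsimp only
          refine ⟨h1, by omega, ?_, ?_, ?_, ?_, ?_, ?_⟩
          · exact fun d p f => f
          · exact fun d r p => hb hdec r (by omega)
          · intro d p; omega
          · intro d p; omega
          · exact fun d p => he hdec (by omega)
          · exact fun d => absurd hdec d
        · -- pc = 1
          have hps := procStep_pc1 (reg := (run input sched t).reg) hdec hp
          have hrg : (step (run input sched t) (sched t)).reg = (run input sched t).reg :=
            step_reg_none _ _ (by rw [hps])
          unfold InvAt
          rw [run_succ, step_proc_self, hps, hrg]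
          dsimp only
          refine ⟨h1, by omega, ?_, ?_, ?_, ?_, ?_, ?_⟩
          · intro d p; omega
          · intro d r p; omega
          · intro d p hr
            by_cases hA : ((run input sched t).proc (sched t)).firstRead = true ∧
                (run input sched t).reg true ((run input sched t).proc (sched t)).round = false
            · rw [if_pos hA]
              exact Or.inr (ha hdec hp hA.1)
            · rw [if_neg hA]
              by_cases hB : (run input sched t).reg true
                  ((run input sched t).proc (sched t)).round = true ∧
                  ((run input sched t).proc (sched t)).firstRead = false
              · rw [if_pos hB]
                exact Or.inr hB.1
              · rw [if_neg hB]
                exact Or.inl (hb hdec hr (by omega))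
          · intro d p; omega
          · exact fun d p => he hdec (by omega)
          · exact fun d => absurd hdec d
        · -- pc = 2 : the write step
          have hps := procStep_pc2 (reg := (run input sched t).reg) hdec hp
          have hwrite : ∀ b k, b = ((run input sched t).proc (sched t)).pref →
              k = ((run input sched t).proc (sched t)).round →
              (step (run input sched t) (sched t)).reg b k = true := by
            intro b k hbk hkr
            exact (step_reg_iff _ _ _ _).2 (Or.inr ⟨hdec, hp, hbk, hkr⟩)
          unfold InvAt
          rw [run_succ, step_proc_self, hps]
          dsimp only
          refine ⟨h1, by omega, ?_, ?_, ?_, ?_, ?_, ?_⟩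
          · intro d p; omega
          · intro d r p; omega
          · intro d p; omega
          · intro d p
            exact hwrite _ _ rfl rfl
          · intro d hle
            by_cases hold : 11 ≤ 4 * ((run input sched t).proc (sched t)).round +
                ((run input sched t).proc (sched t)).pc
            · exact (he hdec hold).imp (step_reg_mono _ _) (step_reg_mono _ _)
            · have hr2 : ((run input sched t).proc (sched t)).round = 2 := by omega
              cases hpref : ((run input sched t).proc (sched t)).pref
              · exact Or.inl (hwrite _ _ hpref.symm hr2.symm)
              · exact Or.inr (hwrite _ _ hpref.symm hr2.symm)
          · exact fun d => absurd hdec d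
        · -- pc = 3
          cases hread : (run input sched t).reg
              (!((run input sched t).proc (sched t)).pref)
              (((run input sched t).proc (sched t)).round - 1)
          · -- decides
            have hps := procStep_pc3_dec (reg := (run input sched t).reg) hdec hp hread
            have hrg : (step (run input sched t) (sched t)).reg = (run input sched t).reg :=
              step_reg_none _ _ (by rw [hps])
            have hr2 : 2 ≤ ((run input sched t).proc (sched t)).round := by
              by_contra hlt
              have hr1 : ((run input sched t).proc (sched t)).round - 1 = 0 := by omega
              rw [hr1, reg_zero] at hread
              exact absurd hread (by simp)
            have hW2 := he hdec (by omega)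
            unfold InvAt
            rw [run_succ, step_proc_self, hps, hrg]
            dsimp only
            refine ⟨h1, h2, ?_, ?_, ?_, ?_, ?_, ?_⟩
            · intro d; exact absurd d (by simp)
            · intro d; exact absurd d (by simp)
            · intro d; exact absurd d (by simp)
            · intro d; exact absurd d (by simp)
            · intro d; exact absurd d (by simp)
            · intro _; exact hW2
          · -- advances to the next round
            have hps := procStep_pc3_adv (reg := (run input sched t).reg) hdec hp hread
            have hrg : (step (run input sched t) (sched t)).reg = (run input sched t).reg :=
              step_reg_none _ _ (by rw [hps])
            unfold InvAt
            rw [run_succ, step_proc_self, hps, hrg]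
            dsimp only
            refine ⟨by omega, by omega, ?_, ?_, ?_, ?_, ?_, ?_⟩
            · intro d p; omega
            · intro d r p
              rw [Nat.add_sub_cancel]
              exact hd hdec hp
            · intro d p; omega
            · intro d p; omega
            · exact fun d hle => he hdec (by omega)
            · exact fun d => absurd hdec d

theorem cnt_succ (j : Fin N) (t : ℕ) :
    cnt sched j (t + 1) = cnt sched j t + if sched t = j then 1 else 0 := by
  unfold cnt
  rw [Finset.range_add_one, Finset.filter_insert]
  split_ifs with h
  · rw [Finset.card_insert_of_notMem (by simp)]
  · simp

theorem cnt_le (j : Fin N) (t : ℕ) : cnt sched j t ≤ t := by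
  have := Finset.card_filter_le (Finset.range t) (fun s => sched s = j)
  simpa [cnt] using this

theorem cnt_pos_exists (j : Fin N) (t : ℕ) (h : 0 < cnt sched j t) :
    ∃ s, s < t ∧ sched s = j := by
  obtain ⟨s, hs⟩ := Finset.card_pos.mp h
  simp only [Finset.mem_filter, Finset.mem_range] at hs
  exact ⟨s, hs.1, hs.2⟩

theorem cnt_frozen {j : Fin N} {a b : ℕ} (hab : a ≤ b)
    (h : ∀ u, a ≤ u → u < b → sched u ≠ j) : cnt sched j b = cnt sched j a := by
  induction b, hab using Nat.le_induction with
  | base => rfl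
  | succ b hb ih =>
    rw [cnt_succ, if_neg (h b hb (by omega)), ih (fun u hu hub => h u hu (by omega))]
    omega

theorem proc_frozen {j : Fin N} {a b : ℕ} (hab : a ≤ b)
    (h : ∀ u, a ≤ u → u < b → sched u ≠ j) :
    (run input sched b).proc j = (run input sched a).proc j := by
  induction b, hab using Nat.le_induction with
  | base => rfl
  | succ b hb ih =>
    rw [run_succ, step_proc_ne _ (fun hh => h b hb (by omega) hh.symm),
      ih (fun u hu hub => h u hu (by omega))]

theorem decided_stable {j : Fin N} {t t' : ℕ} (h : t ≤ t')
    (hd : ((run input sched t).proc j).decided ≠ none) :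
    ((run input sched t').proc j).decided ≠ none := by
  induction t', h using Nat.le_induction with
  | base => exact hd
  | succ t' ht ih =>
    rw [run_succ]
    by_cases hj : j = sched t'
    · subst hj
      rw [step_proc_self, procStep_of_decided ih]
      exact ih
    · rw [step_proc_ne _ hj]
      exact ih

theorem live_before {j : Fin N} {t t' : ℕ} (h : t ≤ t')
    (hd : ((run input sched t').proc j).decided = none) :
    ((run input sched t).proc j).decided = none := by
  by_contra hne
  exact decided_stable input sched h hne hd

theorem pos_cnt (t : ℕ) (j : Fin N) (h : ((run input sched t).proc j).decided = none) :
    4 * ((run input sched t).proc j).round + ((run input sched t).proc j).pc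
      = cnt sched j t + 4 := by
  induction t with
  | zero => simp [run, initConfig, cnt]
  | succ t ih =>
    by_cases hj : j = sched t
    case neg =>
      rw [run_succ, step_proc_ne _ hj] at h ⊢
      rw [cnt_succ, if_neg (fun hh => hj hh.symm)]
      exact ih h
    case pos =>
      subst hj
      have hdt : ((run input sched t).proc (sched t)).decided = none := by
        by_contra hne
        rw [run_succ, step_proc_self, procStep_of_decided hne] at h
        exact hne h
      have hih := ih hdt
      have h2 := (inv input sched t (sched t)).2.1
      have h1 := (inv input sched t (sched t)).1
      have hcs : cnt sched (sched t) (t+1) = cnt sched (sched t) t + 1 := by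
        rw [cnt_succ, if_pos rfl]
      have hpcs : ((run input sched t).proc (sched t)).pc = 0 ∨
          ((run input sched t).proc (sched t)).pc = 1 ∨
          ((run input sched t).proc (sched t)).pc = 2 ∨
          ((run input sched t).proc (sched t)).pc = 3 := by omega
      rcases hpcs with hp | hp | hp | hp
      · rw [run_succ, step_proc_self, procStep_pc0 hdt hp]
        dsimp only
        omega
      · rw [run_succ, step_proc_self, procStep_pc1 hdt hp]
        dsimp only
        omega
      · rw [run_succ, step_proc_self, procStep_pc2 hdt hp]
        dsimp only
        omega
      · cases hread : (run input sched t).reg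
            (!((run input sched t).proc (sched t)).pref)
            (((run input sched t).proc (sched t)).round - 1)
        · rw [run_succ, step_proc_self, procStep_pc3_dec hdt hp hread] at h
          exact absurd h (by simp)
        · rw [run_succ, step_proc_self, procStep_pc3_adv hdt hp hread]
          dsimp only
          omega

theorem decided_write (u : ℕ) (j : Fin N)
    (h : ((run input sched u).proc j).decided ≠ none) :
    ∃ s b, s + 2 ≤ u ∧ WAt input sched s b 2 := by
  induction u with
  | zero => simp [run, initConfig] at h
  | succ u ih =>
    by_cases hd : ((run input sched u).proc j).decided ≠ none
    · obtain ⟨s, b, hs, hW⟩ := ih hd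
      exact ⟨s, b, by omega, hW⟩
    · push_neg at hd
      by_cases hj : j = sched u
      case neg =>
        rw [run_succ, step_proc_ne _ hj] at h
        exact absurd hd h
      case pos =>
        subst hj
        have h2 := (inv input sched u (sched u)).2.1
        have h1 := (inv input sched u (sched u)).1
        have he := (inv input sched u (sched u)).2.2.2.2.2.2.1
        have hpcs : ((run input sched u).proc (sched u)).pc = 0 ∨
            ((run input sched u).proc (sched u)).pc = 1 ∨
            ((run input sched u).proc (sched u)).pc = 2 ∨
            ((run input sched u).proc (sched u)).pc = 3 := by omega
        rcases hpcs with hp | hp | hp | hp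
        · rw [run_succ, step_proc_self, procStep_pc0 hd hp] at h
          exact absurd hd h
        · rw [run_succ, step_proc_self, procStep_pc1 hd hp] at h
          exact absurd hd h
        · rw [run_succ, step_proc_self, procStep_pc2 hd hp] at h
          exact absurd hd h
        · cases hread : (run input sched u).reg
              (!((run input sched u).proc (sched u)).pref)
              (((run input sched u).proc (sched u)).round - 1)
          · have hr2 : 2 ≤ ((run input sched u).proc (sched u)).round := by
              by_contra hlt
              have hr1 : ((run input sched u).proc (sched u)).round - 1 = 0 := by omega
              rw [hr1, reg_zero] at hread
              exact absurd hread (by simp)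
            have hW2 := he hd (by omega)
            rcases hW2 with hW2 | hW2
            · obtain ⟨s, hs, hW⟩ := (reg_iff input sched (by omega) false u).1 hW2
              exact ⟨s, false, by omega, hW⟩
            · obtain ⟨s, hs, hW⟩ := (reg_iff input sched (by omega) true u).1 hW2
              exact ⟨s, true, by omega, hW⟩
          · rw [run_succ, step_proc_self, procStep_pc3_adv hd hp hread] at h
            exact absurd hd h

theorem segLen_le_cnt (t : ℕ) : segLen sched t ≤ cnt sched (sched t) (t + 1) := by
  induction t with
  | zero =>
    have : cnt sched (sched 0) 1 = 1 := by
      rw [cnt_succ, if_pos rfl]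
      simp [cnt]
    simp [segLen, this]
  | succ t ih =>
    show segLen sched (t+1) ≤ _
    rw [segLen]
    split_ifs with hs
    · have hh2 : cnt sched (sched (t+1)) (t+1+1) = cnt sched (sched (t+1)) (t+1) + 1 := by
        rw [cnt_succ, if_pos rfl]
      have hh3 : cnt sched (sched (t+1)) (t+1) = cnt sched (sched t) (t+1) := by rw [hs]
      omega
    · have hh2 : cnt sched (sched (t+1)) (t+1+1) = cnt sched (sched (t+1)) (t+1) + 1 := by
        rw [cnt_succ, if_pos rfl]
      omega

theorem segLen_le (t : ℕ) : segLen sched t ≤ t + 1 := by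
  induction t with
  | zero => simp [segLen]
  | succ t ih =>
    rw [segLen]
    split_ifs <;> omega

theorem segLen_prefix (t : ℕ) (h : segLen sched t = t + 1) :
    ∀ x, x ≤ t → sched x = sched t := by
  induction t with
  | zero =>
    intro x hx
    have : x = 0 := by omega
    rw [this]
  | succ t ih =>
    rw [segLen] at h
    split_ifs at h with hs
    · have hseg : segLen sched t = t + 1 := by omega
      intro x hx
      rcases Nat.lt_or_ge x (t + 1) with hlt | hge
      · rw [ih hseg x (by omega), hs]
      · have : x = t + 1 := by omega
        rw [this]
    · omega

theorem live_upto {w2 : ℕ}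
    (hmin : ∀ s, s < w2 → ¬ (WAt input sched s false 2 ∨ WAt input sched s true 2))
    {u : ℕ} (hu : u ≤ w2 + 1) (j : Fin N) :
    ((run input sched u).proc j).decided = none := by
  by_contra hd
  obtain ⟨s, b, hs, hW⟩ := decided_write input sched u j hd
  refine hmin s (by omega) ?_
  cases b
  · exact Or.inl hW
  · exact Or.inr hW

theorem hbig {w2 : ℕ}
    (hmin : ∀ s, s < w2 → ¬ (WAt input sched s false 2 ∨ WAt input sched s true 2))
    (k : Fin N) (v : ℕ) (hv : v ≤ w2) (hcnt : 8 ≤ cnt sched k v) : False := by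
  have hlive : ((run input sched v).proc k).decided = none :=
    live_upto input sched hmin (by omega) _
  have hpos := pos_cnt input sched v k hlive
  have hW2 := (inv input sched v k).2.2.2.2.2.2.1 hlive (by omega)
  rcases hW2 with hW | hW
  · obtain ⟨s, hs, hWs⟩ := (reg_iff input sched (by omega) false v).1 hW
    exact hmin s (by omega) (Or.inl hWs)
  · obtain ⟨s, hs, hWs⟩ := (reg_iff input sched (by omega) true v).1 hW
    exact hmin s (by omega) (Or.inr hWs)

section Prio
variable (prio : Fin N → ℕ) (Q q0 : ℕ)

theorem prio_chain (hsched : HybridSchedule input sched prio Q q0) {w2 : ℕ}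
    (hmin : ∀ s, s < w2 → ¬ (WAt input sched s false 2 ∨ WAt input sched s true 2))
    {a b : ℕ} (hab : a ≤ b) (hb : b ≤ w2 + 1) :
    prio (sched a) ≤ prio (sched b) := by
  induction b, hab using Nat.le_induction with
  | base => exact le_refl _
  | succ b hb' ih =>
    have h1 : prio (sched a) ≤ prio (sched b) := ih (by omega)
    by_cases hne : sched (b + 1) = sched b
    · rw [hne]; exact h1
    · rcases hsched b hne (live_upto input sched hmin (by omega) _) with hlt | ⟨heq, _⟩
      · exact h1.trans hlt.le
      · exact h1.trans (le_of_eq heq)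

theorem noresume (hsched : HybridSchedule input sched prio Q q0) (hQ : 8 ≤ Q) {w2 : ℕ}
    (hmin : ∀ s, s < w2 → ¬ (WAt input sched s false 2 ∨ WAt input sched s true 2))
    {s2 : ℕ} (h2 : s2 ≤ w2) {j : Fin N} (hj2 : sched s2 = j)
    (hprev : sched (s2 - 1) ≠ j) {s1 : ℕ} (h1 : s1 < s2) (hj1 : sched s1 = j) : False := by
  classical
  have hs2pos : 1 ≤ s2 := by omega
  have hPu : sched (Nat.findGreatest (fun x => sched x = j) (s2 - 1)) = j :=
    Nat.findGreatest_spec (P := fun x => sched x = j) (m := s1) (n := s2 - 1) (by omega) hj1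
  have hule : Nat.findGreatest (fun x => sched x = j) (s2 - 1) ≤ s2 - 1 :=
    Nat.findGreatest_le _
  have hgap : ∀ x, Nat.findGreatest (fun x => sched x = j) (s2 - 1) < x → x ≤ s2 - 1 →
      sched x ≠ j := fun x hx1 hx2 => Nat.findGreatest_is_greatest hx1 hx2
  set u := Nat.findGreatest (fun x => sched x = j) (s2 - 1) with hu
  have hune : u ≠ s2 - 1 := fun h => hprev (h ▸ hPu)
  have hult : u + 1 ≤ s2 - 1 := by omega
  have hne1 : sched (u + 1) ≠ sched u := by
    rw [hPu]; exact hgap (u + 1) (by omega) hult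
  have hlive1 : ((run input sched (u + 1)).proc (sched u)).decided = none :=
    live_upto input sched hmin (by omega) _
  have hchain : prio (sched (u + 1)) ≤ prio (sched (s2 - 1)) :=
    prio_chain input sched prio Q q0 hsched hmin hult (by omega)
  have ht0 : s2 - 1 + 1 = s2 := by omega
  have hne2 : sched (s2 - 1 + 1) ≠ sched (s2 - 1) := by
    rw [ht0, hj2]; exact fun hh => hprev hh.symm
  have hlive2 : ((run input sched (s2 - 1 + 1)).proc (sched (s2 - 1))).decided = none := by
    rw [ht0]; exact live_upto input sched hmin (by omega) _
  have hsw2 := hsched (s2 - 1) hne2 hlive2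
  rw [ht0, hj2] at hsw2
  rcases hsched u hne1 hlive1 with hlt | ⟨heq, hthr⟩
  · rw [hPu] at hlt
    rcases hsw2 with hlt2 | ⟨heq2, _⟩
    · have := (hlt.trans_le hchain).trans hlt2
      exact absurd this (lt_irrefl _)
    · have := hlt.trans_le hchain
      omega
  · by_cases hinit : u + 1 = segLen sched u
    · have hpref := segLen_prefix sched u (by omega)
      rw [hPu] at heq
      rcases hsw2 with hlt2 | ⟨heq2, hthr2⟩
      · have := heq.le.trans hchain
        omega
      · by_cases hinit2 : s2 = segLen sched (s2 - 1)
        · have hall := segLen_prefix sched (s2 - 1) (by omega)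
          have h0a : sched 0 = sched (s2 - 1) := hall 0 (by omega)
          have h0b : sched 0 = sched u := hpref 0 (by omega)
          rw [hPu] at h0b
          exact hprev (h0a.symm.trans h0b)
        · rw [if_neg hinit2] at hthr2
          have h8 : 8 ≤ segLen sched (s2 - 1) := le_trans hQ hthr2
          have hcnt : 8 ≤ cnt sched (sched (s2 - 1)) (s2 - 1 + 1) :=
            le_trans h8 (segLen_le_cnt sched (s2 - 1))
          rw [ht0] at hcnt
          exact hbig input sched hmin _ s2 h2 hcnt
    · rw [if_neg hinit] at hthr
      have h8 : 8 ≤ segLen sched u := le_trans hQ hthr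
      have hcnt : 8 ≤ cnt sched (sched u) (u + 1) := le_trans h8 (segLen_le_cnt sched u)
      exact hbig input sched hmin _ (u + 1) (by omega) hcnt

theorem sched_prev (hsched : HybridSchedule input sched prio Q q0) (hQ : 8 ≤ Q) {w2 : ℕ}
    (hmin : ∀ s, s < w2 → ¬ (WAt input sched s false 2 ∨ WAt input sched s true 2))
    {s : ℕ} (hs : s ≤ w2) {j : Fin N} (hj : sched s = j)
    {s1 : ℕ} (h1 : s1 < s) (hj1 : sched s1 = j) : sched (s - 1) = j := by
  by_contra hne
  exact noresume input sched prio Q q0 hsched hQ hmin hs hj hne h1 hj1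

end Prio

theorem last_op {v : ℕ} {j : Fin N} (hv0 : 0 < v) (hops : ∃ s, s < v ∧ sched s = j)
    (hlive : ((run input sched v).proc j).decided = none) :
    ∃ u, u < v ∧ sched u = j ∧ (∀ x, u < x → x < v → sched x ≠ j) ∧
      cnt sched j v = cnt sched j u + 1 ∧
      (run input sched v).proc j
        = (procStep (run input sched u).reg ((run input sched u).proc j)).1 ∧
      ((run input sched u).proc j).decided = none := by
  classical
  obtain ⟨s0, hs0v, hs0⟩ := hops
  have hPu : sched (Nat.findGreatest (fun x => sched x = j) (v - 1)) = j :=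
    Nat.findGreatest_spec (P := fun x => sched x = j) (m := s0) (n := v - 1) (by omega) hs0
  have huv : Nat.findGreatest (fun x => sched x = j) (v - 1) ≤ v - 1 :=
    Nat.findGreatest_le _
  have hgap : ∀ x, Nat.findGreatest (fun x => sched x = j) (v - 1) < x → x < v →
      sched x ≠ j := fun x h1 h2 => Nat.findGreatest_is_greatest h1 (by omega)
  set u := Nat.findGreatest (fun x => sched x = j) (v - 1) with hudef
  have hlt : u < v := by omega
  have hcnt : cnt sched j v = cnt sched j (u + 1) :=
    cnt_frozen sched (by omega) (fun x hx1 hx2 => hgap x (by omega) hx2)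
  have hcnt1 : cnt sched j (u + 1) = cnt sched j u + 1 := by rw [cnt_succ, if_pos hPu]
  have hfroz : (run input sched v).proc j = (run input sched (u + 1)).proc j :=
    proc_frozen input sched (by omega) (fun x hx1 hx2 => hgap x (by omega) hx2)
  have hstep : (run input sched (u + 1)).proc j
      = (procStep (run input sched u).reg ((run input sched u).proc j)).1 := by
    rw [run_succ, ← hPu, step_proc_self]
  have hliveu : ((run input sched u).proc j).decided = none :=
    live_before input sched (by omega) hlive
  exact ⟨u, hlt, hPu, hgap, by omega, hfroz.trans hstep, hliveu⟩

theorem round1_unanimous (prio : Fin N → ℕ) (Q q0 : ℕ)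
    (hsched : HybridSchedule input sched prio Q q0) (hQ : 8 ≤ Q) {w2 : ℕ}
    (hmin : ∀ s, s < w2 → ¬ (WAt input sched s false 2 ∨ WAt input sched s true 2))
    {sf st : ℕ} (hsf : sf < w2) (hst : st < w2)
    (hWf : WAt input sched sf false 1) (hWt : WAt input sched st true 1) : False := by
  classical
  have hexf : ∃ s, WAt input sched s false 1 := ⟨sf, hWf⟩
  have hext : ∃ s, WAt input sched s true 1 := ⟨st, hWt⟩
  have hW0 := Nat.find_spec hexf
  have hW1 := Nat.find_spec hext
  have hf0w : Nat.find hexf < w2 := lt_of_le_of_lt (Nat.find_min' hexf hWf) hsf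
  have hf1w : Nat.find hext < w2 := lt_of_le_of_lt (Nat.find_min' hext hWt) hst
  set f0 := Nat.find hexf with hf0def
  set f1 := Nat.find hext with hf1def
  rcases Nat.lt_or_ge f0 f1 with hlt | hge
  · -- f0 < f1 : analyze the first (true,1)-writer
    obtain ⟨hd1, hp1, hr1, hpref1⟩ := hW1
    have hpos1 := pos_cnt input sched f1 (sched f1) hd1
    rw [hr1, hp1] at hpos1
    have hops : ∃ s, s < f1 ∧ sched s = sched f1 :=
      cnt_pos_exists sched _ f1 (by omega)
    obtain ⟨u, huf, hschu, hgap, hcu, hstate, hliveu⟩ :=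
      last_op input sched (by omega) hops hd1
    have hposu := pos_cnt input sched u (sched f1) hliveu
    have h2u := (inv input sched u (sched f1)).2.1
    have h1u := (inv input sched u (sched f1)).1
    have hpcu : ((run input sched u).proc (sched f1)).pc = 1 := by omega
    have hru : ((run input sched u).proc (sched f1)).round = 1 := by omega
    rw [procStep_pc1 hliveu hpcu] at hstate
    have hprefeq := congrArg ProcState.pref hstate
    dsimp only at hprefeq
    rw [hpref1, hru] at hprefeq
    -- contiguity : u = f1 - 1
    have hprev1 : sched (f1 - 1) = sched f1 :=
      sched_prev input sched prio Q q0 hsched hQ hmin (by omega) rfl huf hschu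
    have hueq : u = f1 - 1 := by
      rcases Nat.lt_or_ge u (f1 - 1) with h | h
      · exact absurd hprev1 (hgap (f1 - 1) h (by omega))
      · omega
    -- second read is false
    have hv1 : (run input sched u).reg true 1 = false := by
      cases hb : (run input sched u).reg true 1
      · rfl
      · obtain ⟨s, hs, hWs⟩ := (reg_iff input sched (by omega) true u).1 hb
        have := Nat.find_min' hext hWs
        omega
    rw [hv1] at hprefeq
    -- firstRead is false
    have hfr : ((run input sched u).proc (sched f1)).firstRead = false := by
      cases hb : ((run input sched u).proc (sched f1)).firstRead
      · rfl
      · rw [hb] at hprefeq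
        simp at hprefeq
    rw [hfr] at hprefeq
    -- the op before u : pc = 0
    have hops' : ∃ s, s < u ∧ sched s = sched f1 :=
      cnt_pos_exists sched _ u (by omega)
    obtain ⟨u', huf', hschu', hgap', hcu', hstate', hliveu'⟩ :=
      last_op input sched (by omega) hops' hliveu
    have hposu' := pos_cnt input sched u' (sched f1) hliveu'
    have h2u' := (inv input sched u' (sched f1)).2.1
    have h1u' := (inv input sched u' (sched f1)).1
    have hpcu' : ((run input sched u').proc (sched f1)).pc = 0 := by omega
    have hru' : ((run input sched u').proc (sched f1)).round = 1 := by omega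
    rw [procStep_pc0 hliveu' hpcu'] at hstate'
    have hfreq := congrArg ProcState.firstRead hstate'
    dsimp only at hfreq
    rw [hfr, hru'] at hfreq
    -- contiguity : u' = u - 1
    have hprev2 : sched (u - 1) = sched f1 :=
      sched_prev input sched prio Q q0 hsched hQ hmin (by omega) hschu huf' hschu'
    have hueq' : u' = u - 1 := by
      rcases Nat.lt_or_ge u' (u - 1) with h | h
      · exact absurd hprev2 (hgap' (u - 1) h (by omega))
      · omega
    -- the (false,1)-write cannot be placed
    have hnof : ∀ s, s < u' → ¬ WAt input sched s false 1 := by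
      intro s hs hWs
      have : (run input sched u').reg false 1 = true :=
        (reg_iff input sched (by omega) false u').2 ⟨s, hs, hWs⟩
      rw [this] at hfreq
      exact absurd hfreq.symm (by simp)
    have hf0u' : u' ≤ f0 := by
      by_contra hcon
      exact hnof f0 (by omega) hW0
    obtain ⟨hd0, hp0, hr0, hpref0⟩ := hW0
    have : f0 = u' ∨ f0 = u := by omega
    rcases this with h | h
    · rw [h, hschu'] at hp0
      omega
    · rw [h, hschu] at hp0
      omega
  · -- f1 < f0 : analyze the first (false,1)-writer
    have hlt : f1 < f0 := by
      rcases Nat.lt_or_ge f1 f0 with h | h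
      · exact h
      · exfalso
        have heq : f0 = f1 := by
          rcases Nat.lt_or_ge f0 f1 with h' | h'
          · omega
          · omega
        have h1 := hW0.2.2.2
        have h2 := hW1.2.2.2
        rw [heq] at h1
        rw [h1] at h2
        exact absurd h2 (by simp)
    obtain ⟨hd0, hp0, hr0, hpref0⟩ := hW0
    have hpos0 := pos_cnt input sched f0 (sched f0) hd0
    rw [hr0, hp0] at hpos0
    have hops : ∃ s, s < f0 ∧ sched s = sched f0 :=
      cnt_pos_exists sched _ f0 (by omega)
    obtain ⟨u, huf, hschu, hgap, hcu, hstate, hliveu⟩ :=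
      last_op input sched (by omega) hops hd0
    have hposu := pos_cnt input sched u (sched f0) hliveu
    have h2u := (inv input sched u (sched f0)).2.1
    have h1u := (inv input sched u (sched f0)).1
    have hpcu : ((run input sched u).proc (sched f0)).pc = 1 := by omega
    have hru : ((run input sched u).proc (sched f0)).round = 1 := by omega
    rw [procStep_pc1 hliveu hpcu] at hstate
    have hprefeq := congrArg ProcState.pref hstate
    dsimp only at hprefeq
    rw [hpref0, hru] at hprefeq
    have hprev1 : sched (f0 - 1) = sched f0 :=
      sched_prev input sched prio Q q0 hsched hQ hmin (by omega) rfl huf hschu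
    have hueq : u = f0 - 1 := by
      rcases Nat.lt_or_ge u (f0 - 1) with h | h
      · exact absurd hprev1 (hgap (f0 - 1) h (by omega))
      · omega
    -- firstRead is false by minimality of f0 and the invariant
    have hfr : ((run input sched u).proc (sched f0)).firstRead = false := by
      cases hb : ((run input sched u).proc (sched f0)).firstRead
      · rfl
      · exfalso
        have := (inv input sched u (sched f0)).2.2.1 hliveu hpcu hb
        rw [hru] at this
        obtain ⟨s, hs, hWs⟩ := (reg_iff input sched (by omega) false u).1 this
        have := Nat.find_min' hexf hWs
        omega
    rw [hfr] at hprefeq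
    -- hence the second read must be false
    have hv1 : (run input sched u).reg true 1 = false := by
      cases hb : (run input sched u).reg true 1
      · rfl
      · rw [hb] at hprefeq
        simp at hprefeq
    -- so no (true,1)-write before u, forcing f1 = u, a contradiction
    have hnot : ∀ s, s < u → ¬ WAt input sched s true 1 := by
      intro s hs hWs
      have : (run input sched u).reg true 1 = true :=
        (reg_iff input sched (by omega) true u).2 ⟨s, hs, hWs⟩
      rw [this] at hv1
      exact absurd hv1 (by simp)
    have hf1u : u ≤ f1 := by
      by_contra hcon
      exact hnot f1 (by omega) hW1
    have : f1 = u := by omega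
    have hp1 := hW1.2.1
    rw [this, hschu] at hp1
    omega

theorem write3_write2 : ∀ s : ℕ, ∀ b : Bool, WAt input sched s b 3 →
    ∃ s', s' < s ∧ WAt input sched s' b 2 := by
  intro s
  induction s using Nat.strong_induction_on with
  | _ s IH =>
    intro b hW
    obtain ⟨hd, hp, hr, hpref⟩ := hW
    have hcP := (inv input sched s (sched s)).2.2.2.2.1 hd hp (by omega)
    rw [hr, hpref] at hcP
    norm_num at hcP
    rcases hcP with h2 | h3
    · exact (reg_iff input sched (by omega) b s).1 h2
    · obtain ⟨s'', hs'', hW''⟩ := (reg_iff input sched (by omega) b s).1 h3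
      obtain ⟨s', hs', hW'⟩ := IH s'' hs'' b hW''
      exact ⟨s', by omega, hW'⟩

theorem no_conflict (prio : Fin N → ℕ) (Q q0 : ℕ)
    (hsched : HybridSchedule input sched prio Q q0) (hQ : 8 ≤ Q)
    (hf : ∃ s, WAt input sched s false 2) (ht : ∃ s, WAt input sched s true 2) : False := by
  classical
  have hex : ∃ s, WAt input sched s false 2 ∨ WAt input sched s true 2 := by
    obtain ⟨s, hs⟩ := hf
    exact ⟨s, Or.inl hs⟩
  have hspec := Nat.find_spec hex
  set w2 := Nat.find hex with hw2def
  have hmin : ∀ s, s < w2 → ¬ (WAt input sched s false 2 ∨ WAt input sched s true 2) :=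
    fun s hs => Nat.find_min hex hs
  -- first : the round-2 writer at w2 produced a same-valued round-1 write before w2
  have hXpart : ∀ b : Bool, WAt input sched w2 b 2 → ∃ sX, sX < w2 ∧ WAt input sched sX b 1 := by
    intro b hX
    obtain ⟨hdX, hpX, hrX, hprefX⟩ := hX
    have hcP := (inv input sched w2 (sched w2)).2.2.2.2.1 hdX hpX (by rw [hrX])
    rw [hrX, hprefX] at hcP
    norm_num at hcP
    rcases hcP with h1 | h2
    · exact (reg_iff input sched (by omega) b w2).1 h1
    · obtain ⟨s, hs, hWs⟩ := (reg_iff input sched (by omega) b w2).1 h2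
      exfalso
      refine hmin s hs ?_
      cases b
      · exact Or.inl hWs
      · exact Or.inr hWs
  rcases hspec with hX | hX
  · -- first round-2 write has value false; analyze the first (true,2)-writer
    obtain ⟨sX, hsXw, hWX⟩ := hXpart false hX
    have hwspec := Nat.find_spec ht
    set w := Nat.find ht with hwdef
    have hminw : ∀ s, s < w → ¬ WAt input sched s true 2 := fun s hs => Nat.find_min ht hs
    have hw2w : w2 < w := by
      have hle : w2 ≤ w := Nat.find_min' hex (Or.inr hwspec)
      rcases Nat.lt_or_ge w2 w with h | h
      · exact h
      · exfalso
        have heq : w2 = w := by omega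
        have h1 := hX.2.2.2
        have h2 := hwspec.2.2.2
        rw [heq] at h1
        rw [h1] at h2
        exact absurd h2 (by simp)
    obtain ⟨hdY, hpY, hrY, hprefY⟩ := hwspec
    have hposY := pos_cnt input sched w (sched w) hdY
    rw [hrY, hpY] at hposY
    have hops : ∃ s, s < w ∧ sched s = sched w :=
      cnt_pos_exists sched _ w (by omega)
    obtain ⟨t1, ht1w, hscht1, hgap1, hc1, hstate1, hlive1⟩ :=
      last_op input sched (by omega) hops hdY
    have hpos1 := pos_cnt input sched t1 (sched w) hlive1
    have h2t1 := (inv input sched t1 (sched w)).2.1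
    have h1t1 := (inv input sched t1 (sched w)).1
    have hpct1 : ((run input sched t1).proc (sched w)).pc = 1 := by omega
    have hrt1 : ((run input sched t1).proc (sched w)).round = 2 := by omega
    rw [procStep_pc1 hlive1 hpct1] at hstate1
    have hprefeq := congrArg ProcState.pref hstate1
    dsimp only at hprefeq
    rw [hprefY, hrt1] at hprefeq
    -- the fresh read of a_1[2] is false (w is the first (true,2)-write)
    have hv1 : (run input sched t1).reg true 2 = false := by
      cases hb : (run input sched t1).reg true 2
      · rfl
      · obtain ⟨s, hs, hWs⟩ := (reg_iff input sched (by omega) true t1).1 hb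
        exact absurd hWs (hminw s (by omega))
    rw [hv1] at hprefeq
    -- firstRead false, pref carried = true
    have hfr : ((run input sched t1).proc (sched w)).firstRead = false := by
      cases hb : ((run input sched t1).proc (sched w)).firstRead
      · rfl
      · rw [hb] at hprefeq
        simp at hprefeq
    rw [hfr] at hprefeq
    simp at hprefeq
    -- previous op t0 : pc = 0 at round 2
    have hops' : ∃ s, s < t1 ∧ sched s = sched w :=
      cnt_pos_exists sched _ t1 (by omega)
    obtain ⟨t0, ht01, hscht0, hgap0, hc0, hstate0, hlive0⟩ :=
      last_op input sched (by omega) hops' hlive1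
    have hpos0 := pos_cnt input sched t0 (sched w) hlive0
    have h2t0 := (inv input sched t0 (sched w)).2.1
    have h1t0 := (inv input sched t0 (sched w)).1
    have hpct0 : ((run input sched t0).proc (sched w)).pc = 0 := by omega
    have hrt0 : ((run input sched t0).proc (sched w)).round = 2 := by omega
    rw [procStep_pc0 hlive0 hpct0] at hstate0
    have hfreq := congrArg ProcState.firstRead hstate0
    dsimp only at hfreq
    rw [hfr, hrt0] at hfreq
    -- so a_0[2] is unwritten at t0, hence t0 < w2
    have ht0w2 : t0 < w2 := by
      have hnof : ¬ (w2 < t0) := by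
        intro hcon
        have : (run input sched t0).reg false 2 = true :=
          (reg_iff input sched (by omega) false t0).2 ⟨w2, hcon, hX⟩
        rw [this] at hfreq
        exact absurd hfreq.symm (by simp)
      have hne : t0 ≠ w2 := by
        intro heq
        have hp := hX.2.1
        rw [← heq, hscht0] at hp
        omega
      omega
    -- pref at t0 is true and invariant (b) gives a (true,1)-write before t0
    have hprefeq0 := congrArg ProcState.pref hstate0
    dsimp only at hprefeq0
    rw [hprefeq] at hprefeq0
    have hbinv := (inv input sched t0 (sched w)).2.2.2.1 hlive0 (by omega) (by omega)
    rw [hrt0, ← hprefeq0] at hbinv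
    norm_num at hbinv
    obtain ⟨sY, hsY, hWY⟩ := (reg_iff input sched (by omega) true t0).1 hbinv
    exact round1_unanimous input sched prio Q q0 hsched hQ hmin hsXw (by omega) hWX hWY
  · -- first round-2 write has value true; analyze the first (false,2)-writer
    obtain ⟨sX, hsXw, hWX⟩ := hXpart true hX
    have hwspec := Nat.find_spec hf
    set w := Nat.find hf with hwdef
    have hminw : ∀ s, s < w → ¬ WAt input sched s false 2 := fun s hs => Nat.find_min hf hs
    have hw2w : w2 < w := by
      have hle : w2 ≤ w := Nat.find_min' hex (Or.inl hwspec)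
      rcases Nat.lt_or_ge w2 w with h | h
      · exact h
      · exfalso
        have heq : w2 = w := by omega
        have h1 := hX.2.2.2
        have h2 := hwspec.2.2.2
        rw [heq] at h1
        rw [h1] at h2
        exact absurd h2 (by simp)
    obtain ⟨hdY, hpY, hrY, hprefY⟩ := hwspec
    have hposY := pos_cnt input sched w (sched w) hdY
    rw [hrY, hpY] at hposY
    have hops : ∃ s, s < w ∧ sched s = sched w :=
      cnt_pos_exists sched _ w (by omega)
    obtain ⟨t1, ht1w, hscht1, hgap1, hc1, hstate1, hlive1⟩ :=
      last_op input sched (by omega) hops hdY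
    have hpos1 := pos_cnt input sched t1 (sched w) hlive1
    have h2t1 := (inv input sched t1 (sched w)).2.1
    have h1t1 := (inv input sched t1 (sched w)).1
    have hpct1 : ((run input sched t1).proc (sched w)).pc = 1 := by omega
    have hrt1 : ((run input sched t1).proc (sched w)).round = 2 := by omega
    rw [procStep_pc1 hlive1 hpct1] at hstate1
    have hprefeq := congrArg ProcState.pref hstate1
    dsimp only at hprefeq
    rw [hprefY, hrt1] at hprefeq
    -- firstRead is false : otherwise the FR-invariant yields an earlier (false,2)-write
    have hfr : ((run input sched t1).proc (sched w)).firstRead = false := by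
      cases hb : ((run input sched t1).proc (sched w)).firstRead
      · rfl
      · exfalso
        have := (inv input sched t1 (sched w)).2.2.1 hlive1 hpct1 hb
        rw [hrt1] at this
        obtain ⟨s, hs, hWs⟩ := (reg_iff input sched (by omega) false t1).1 this
        exact absurd hWs (hminw s (by omega))
    rw [hfr] at hprefeq
    -- hence the fresh read of a_1[2] is false, so t1 < w2
    have hv1 : (run input sched t1).reg true 2 = false := by
      cases hb : (run input sched t1).reg true 2
      · rfl
      · rw [hb] at hprefeq
        simp at hprefeq
    rw [hv1] at hprefeq
    simp at hprefeq
    have ht1w2 : t1 < w2 := by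
      have hnof : ¬ (w2 < t1) := by
        intro hcon
        have : (run input sched t1).reg true 2 = true :=
          (reg_iff input sched (by omega) true t1).2 ⟨w2, hcon, hX⟩
        rw [this] at hv1
        exact absurd hv1 (by simp)
      have hne : t1 ≠ w2 := by
        intro heq
        have hp := hX.2.1
        rw [← heq, hscht1] at hp
        omega
      omega
    -- invariant (b) at t1 gives a (false,1)-write before t1
    have hbinv := (inv input sched t1 (sched w)).2.2.2.1 hlive1 (by omega) (by omega)
    rw [hrt1, hprefeq] at hbinv
    norm_num at hbinv
    obtain ⟨sY, hsY, hWY⟩ := (reg_iff input sched (by omega) false t1).1 hbinv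
    exact round1_unanimous input sched prio Q q0 hsched hQ hmin (by omega) hsXw hWY hWX

end Run

end LC

/-- When lean-consensus is run on a hybrid-scheduled uniprocessor with
a quantum of at least `8` operations, every process decides after executing at most `12`
operations: any process that has taken at least `12` steps has decided. -/
theorem hybrid_termination {N : ℕ} (input : Fin N → Bool) (sched : ℕ → Fin N)
    (prio : Fin N → ℕ) (Q q0 : ℕ) (hQ : 8 ≤ Q) (hq0 : q0 ≤ Q)
    (hsched : HybridSchedule input sched prio Q q0)
    (i : Fin N) (t : ℕ)
    (h12 : 12 ≤ ((Finset.range t).filter fun s => sched s = i).card) :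
    ((run input sched t).proc i).decided ≠ none := by
  classical
  intro hdec
  have hcnt : 12 ≤ LC.cnt sched i t := h12
  have hpos := LC.pos_cnt input sched t i hdec
  have h2t := (LC.inv input sched t i).2.1
  have hr4 : 4 ≤ ((run input sched t).proc i).round := by omega
  have hex : ∃ u, 4 ≤ ((run input sched u).proc i).round := ⟨t, hr4⟩
  have hm := Nat.find_spec hex
  have hm0 : Nat.find hex ≠ 0 := by
    intro h0
    rw [h0] at hm
    have : ((run input sched 0).proc i).round = 1 := by simp [run, initConfig]
    omega
  have hmlt : ¬ 4 ≤ ((run input sched (Nat.find hex - 1)).proc i).round :=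
    Nat.find_min hex (by omega)
  set m := Nat.find hex with hmdef
  set e := m - 1 with hedef
  have he1 : e + 1 = m := by omega
  have hstep : (run input sched m).proc i
      = (run input sched (e + 1)).proc i := by rw [he1]
  rw [hstep] at hm
  -- process i must be scheduled at e
  have hsch : sched e = i := by
    by_contra hne
    rw [LC.run_succ, LC.step_proc_ne _ (fun hh => hne hh.symm)] at hm
    exact hmlt hm
  have hdece : ((run input sched e).proc i).decided = none := by
    by_contra hne
    rw [LC.run_succ, ← hsch, LC.step_proc_self, LC.procStep_of_decided] at hm
    · rw [hsch] at hm
      exact hmlt hm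
    · rw [hsch]
      exact hne
  have h2e := (LC.inv input sched e i).2.1
  have h1e := (LC.inv input sched e i).1
  have hpcs : ((run input sched e).proc i).pc = 0 ∨ ((run input sched e).proc i).pc = 1 ∨
      ((run input sched e).proc i).pc = 2 ∨ ((run input sched e).proc i).pc = 3 := by omega
  have hsp : (run input sched (e + 1)).proc i
      = (procStep (run input sched e).reg ((run input sched e).proc i)).1 := by
    rw [LC.run_succ, ← hsch, LC.step_proc_self]
  rcases hpcs with hp | hp | hp | hp
  · rw [hsp, LC.procStep_pc0 hdece hp] at hm
    dsimp only at hm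
    exact hmlt (by omega)
  · rw [hsp, LC.procStep_pc1 hdece hp] at hm
    dsimp only at hm
    exact hmlt (by omega)
  · rw [hsp, LC.procStep_pc2 hdece hp] at hm
    dsimp only at hm
    exact hmlt (by omega)
  · cases hread : (run input sched e).reg (!((run input sched e).proc i).pref)
        (((run input sched e).proc i).round - 1)
    · rw [hsp, LC.procStep_pc3_dec hdece hp hread] at hm
      dsimp only at hm
      exact hmlt (by omega)
    · -- the advancing step : round at e must be 3
      have hr3 : ((run input sched e).proc i).round = 3 := by
        rw [hsp, LC.procStep_pc3_adv hdece hp hread] at hm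
        dsimp only at hm
        omega
      -- i had written its preference into round 3
      have hW3 := (LC.inv input sched e i).2.2.2.2.2.1 hdece hp
      rw [hr3] at hW3
      obtain ⟨s3, hs3, hWs3⟩ := (LC.reg_iff input sched (r := 3) (by omega)
        ((run input sched e).proc i).pref e).1 hW3
      obtain ⟨s2a, hs2a, hW2a⟩ := LC.write3_write2 input sched s3 _ hWs3
      -- while the opposite value was written into round 2
      rw [hr3] at hread
      norm_num at hread
      obtain ⟨s2b, hs2b, hW2b⟩ := (LC.reg_iff input sched (r := 2) (by omega)
        (!((run input sched e).proc i).pref) e).1 hread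
      cases hpref : ((run input sched e).proc i).pref
      · rw [hpref] at hW2a hW2b
        exact LC.no_conflict input sched prio Q q0 hsched hQ ⟨s2a, hW2a⟩
          ⟨s2b, by simpa using hW2b⟩
      · rw [hpref] at hW2a hW2b
        exact LC.no_conflict input sched prio Q q0 hsched hQ ⟨s2b, by simpa using hW2b⟩
          ⟨s2a, hW2a⟩
end

section
/- There exist a noise distribution F and adversary delays such that the lean-consensus algorithm requires expected Ω(log n) rounds in the noisy scheduling model, even without failures. Specifically, take all Δ_{ij} = 0 for j ≥ 1, starting offsets Δ_{i0} that are distinct values in the open interval (0,1), and let every operation's duration be 1 or 2 time units with probability 1/2 each, independently. Then there is a universal constant κ > 0 such that for all sufficiently large even n, when n/2 processes start with input 0 and n/2 with input 1, the expected round number at which the first process decides is at least κ·ln n. -/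
open MeasureTheory ProbabilityTheory
open scoped ENNReal

/-- `opCountT sched i t` is the number of operations process `i` performs during the
first `t` steps of the (total) schedule `sched`. -/
def opCountT {N : ℕ} (sched : ℕ → Fin N) (i : Fin N) (t : ℕ) : ℕ :=
  ((Finset.range t).filter fun s => sched s = i).card

/-- `ConsistentTotal T sched` says that the schedule `sched` is the interleaving of the
processes' operations in increasing order of their (finite) occurrence times, where
`T i j` is the time at which process `i`'s `j`-th operation occurs: every scheduled
operation occurs no later than every other pending operation, and every operation is
eventually performed. -/
def ConsistentTotal {N : ℕ} (T : Fin N → ℕ → ℝ) (sched : ℕ → Fin N) : Prop :=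
  (∀ t i', T (sched t) (opCountT sched (sched t) t + 1) ≤
      T i' (opCountT sched i' t + 1)) ∧
  (∀ i j, ∃ t, sched t = i ∧ opCountT sched i t = j)

/-- `firstDecisionRound input sched` is the round number (as an element of `ℝ≥0∞`, `⊤`
if no process ever decides) at which the first process to decide does so, in the
execution of lean-consensus from inputs `input` under schedule `sched`. -/
noncomputable def firstDecisionRound {N : ℕ} (input : Fin N → Bool)
    (sched : ℕ → Fin N) : ℝ≥0∞ :=
  sInf {x : ℝ≥0∞ | ∃ (k t : ℕ) (i : Fin N), x = k ∧
    ((run input sched t).proc i).decided = none ∧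
    ((run input sched (t + 1)).proc i).decided ≠ none ∧
    ((run input sched t).proc i).round = k}

open MeasureTheory ProbabilityTheory
open scoped ENNReal

namespace LCLB

lemma run_succ {N : ℕ} (input : Fin N → Bool) (sched : ℕ → Fin N) (t : ℕ) :
    run input sched (t + 1) = step (run input sched t) (sched t) := rfl

lemma opCountT_succ {N : ℕ} (sched : ℕ → Fin N) (i : Fin N) (t : ℕ) :
    opCountT sched i (t + 1) =
      if sched t = i then opCountT sched i t + 1 else opCountT sched i t := by
  unfold opCountT
  rw [Finset.range_add_one, Finset.filter_insert]
  split
  · rw [Finset.card_insert_of_notMem (by simp)]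
  · rfl

lemma opCountT_mono {N : ℕ} (sched : ℕ → Fin N) (i : Fin N) {t t' : ℕ} (h : t ≤ t') :
    opCountT sched i t ≤ opCountT sched i t' :=
  Finset.card_le_card (Finset.filter_subset_filter _ (by
    intro a ha; simp only [Finset.mem_range] at *; omega))

lemma run_proc_ne {N : ℕ} (input : Fin N → Bool) (sched : ℕ → Fin N) {i : Fin N} {t : ℕ}
    (h : sched t ≠ i) :
    (run input sched (t + 1)).proc i = (run input sched t).proc i := by
  rw [run_succ]
  exact Function.update_of_ne (Ne.symm h) _ _

lemma run_proc_self {N : ℕ} (input : Fin N → Bool) (sched : ℕ → Fin N) (t : ℕ) :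
    (run input sched (t + 1)).proc (sched t) =
      (procStep (run input sched t).reg ((run input sched t).proc (sched t))).1 := by
  rw [run_succ]
  exact Function.update_self _ _ _

lemma proc_congr_le {N : ℕ} (input : Fin N → Bool) (sched : ℕ → Fin N) (i : Fin N)
    {t t' : ℕ} (h : t ≤ t') (hc : opCountT sched i t' ≤ opCountT sched i t) :
    (run input sched t').proc i = (run input sched t).proc i := by
  induction t', h using Nat.le_induction with
  | base => rfl
  | succ t'' ht ih =>
    have h1 : opCountT sched i t ≤ opCountT sched i t'' := opCountT_mono sched i ht
    have h2 := opCountT_succ sched i t''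
    by_cases hs : sched t'' = i
    · exfalso
      rw [if_pos hs] at h2
      omega
    · rw [if_neg hs] at h2
      rw [run_proc_ne input sched hs]
      exact ih (by omega)

lemma proc_congr {N : ℕ} (input : Fin N → Bool) (sched : ℕ → Fin N) (i : Fin N)
    {t t' : ℕ} (hc : opCountT sched i t = opCountT sched i t') :
    (run input sched t').proc i = (run input sched t).proc i := by
  rcases le_total t t' with h | h
  · exact proc_congr_le input sched i h (by omega)
  · exact (proc_congr_le input sched i h (by omega)).symm

lemma step_reg_le {N : ℕ} (c : Config N) (j : Fin N) {b : Bool} {k : ℕ}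
    (h : c.reg b k = true) : (step c j).reg b k = true := by
  show (match (procStep c.reg (c.proc j)).2 with
    | some w => if b = w.1 ∧ k = w.2 then true else c.reg b k
    | none => c.reg b k) = true
  cases hw : (procStep c.reg (c.proc j)).2 with
  | none => exact h
  | some w =>
    dsimp only
    split
    · rfl
    · exact h

lemma reg_mono {N : ℕ} (input : Fin N → Bool) (sched : ℕ → Fin N) {b : Bool} {k : ℕ}
    {t t' : ℕ} (h : t ≤ t') (hr : (run input sched t).reg b k = true) :
    (run input sched t').reg b k = true := by
  induction t', h using Nat.le_induction with
  | base => exact hr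
  | succ t'' ht ih => rw [run_succ]; exact step_reg_le _ _ ih

lemma reg_zero {N : ℕ} (input : Fin N → Bool) (sched : ℕ → Fin N) (b : Bool) (t : ℕ) :
    (run input sched t).reg b 0 = true :=
  reg_mono input sched (Nat.zero_le t) (by rfl)

end LCLB
namespace LCLB

lemma procStep_write_eq {regs : Bool → ℕ → Bool} {s : ProcState} {w : Bool × ℕ}
    (h : (procStep regs s).2 = some w) :
    s.decided = none ∧ s.pc = 2 ∧ w = (s.pref, s.round) := by
  unfold procStep at h
  split at h
  · simp at h
  · split at h
    · simp at h
    · split at h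
      · simp at h
      · split at h
        · rename_i h1 h2 h3 h4
          refine ⟨by simpa using h1, h4, ?_⟩
          simpa using h.symm
        · split at h <;> simp at h

lemma procStep_decide {regs : Bool → ℕ → Bool} {s : ProcState}
    (h0 : s.decided = none) (h1 : (procStep regs s).1.decided ≠ none) :
    s.pc ≠ 0 ∧ s.pc ≠ 1 ∧ s.pc ≠ 2 ∧ regs (!s.pref) (s.round - 1) = false ∧
      (procStep regs s).1.round = s.round := by
  unfold procStep at h1 ⊢
  split at h1
  · exact absurd h0 (by assumption)
  · split at h1
    · simp at h1; exact absurd h0 h1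
    · split at h1
      · simp at h1; exact absurd h0 h1
      · split at h1
        · simp at h1; exact absurd h0 h1
        · split at h1
          · rename_i hd hp0 hp1 hp2 hr
            refine ⟨hp0, hp1, hp2, by simpa using hr, ?_⟩
            rw [if_neg hd, if_neg hp0, if_neg hp1, if_neg hp2, if_pos hr]
          · simp at h1; exact absurd h0 h1

/-- The basic invariant relating a live process's program counter and round number
to the number of operations it has performed. -/
lemma run_inv {N : ℕ} (input : Fin N → Bool) (sched : ℕ → Fin N) (i : Fin N) :
    ∀ t : ℕ, ((run input sched t).proc i).decided = none →
      4 * ((run input sched t).proc i).round + ((run input sched t).proc i).pc =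
        opCountT sched i t + 4 ∧ ((run input sched t).proc i).pc ≤ 3 := by
  intro t
  induction t with
  | zero => exact fun _ => ⟨rfl, Nat.zero_le 3⟩
  | succ t ih =>
    intro hd
    by_cases hs : sched t = i
    · subst hs
      rw [run_proc_self input sched t] at hd ⊢
      set s := (run input sched t).proc (sched t) with hsdef
      have hod : s.decided = none := by
        by_contra hne
        rw [procStep, if_pos hne] at hd
        exact absurd hd hne
      obtain ⟨heq, hpc⟩ := ih hod
      rw [opCountT_succ, if_pos rfl]
      unfold procStep at hd ⊢
      rw [if_neg (by simp [hod])] at hd ⊢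
      interval_cases hc : s.pc
      · rw [if_pos rfl]
        simp only []
        simp
        omega
      · rw [if_neg (by omega), if_pos rfl]
        simp
        omega
      · rw [if_neg (by omega), if_neg (by omega), if_pos rfl]
        simp
        omega
      · rw [if_neg (by omega), if_neg (by omega), if_neg (by omega)] at hd ⊢
        split at hd
        · simp at hd
        · rename_i hreg
          rw [if_neg hreg]
          simp
          omega
    · rw [run_proc_ne input sched hs] at hd ⊢
      rw [opCountT_succ, if_neg hs]
      exact ih hd

/-- Any `true` register (other than in round `0`) was written by some process at an
earlier step, at which point that process was live with `pc = 2` and matching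
preference and round. -/
lemma write_origin {N : ℕ} (input : Fin N → Bool) (sched : ℕ → Fin N) {b : Bool} {k : ℕ}
    (hk : 1 ≤ k) :
    ∀ t : ℕ, (run input sched t).reg b k = true →
      ∃ s : ℕ, s < t ∧ ((run input sched s).proc (sched s)).decided = none ∧
        ((run input sched s).proc (sched s)).pc = 2 ∧
        ((run input sched s).proc (sched s)).round = k ∧
        ((run input sched s).proc (sched s)).pref = b := by
  intro t
  induction t with
  | zero =>
    intro h
    exfalso
    have : (k == 0) = true := h
    simp at this
    omega
  | succ t ih =>
    intro h
    rw [run_succ] at h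
    have h' : (match (procStep (run input sched t).reg ((run input sched t).proc (sched t))).2 with
      | some w => if b = w.1 ∧ k = w.2 then true else (run input sched t).reg b k
      | none => (run input sched t).reg b k) = true := h
    cases hw : (procStep (run input sched t).reg ((run input sched t).proc (sched t))).2 with
    | none =>
      rw [hw] at h'
      obtain ⟨s, hs, rest⟩ := ih h'
      exact ⟨s, by omega, rest⟩
    | some w =>
      rw [hw] at h'
      dsimp only at h'
      by_cases hcond : b = w.1 ∧ k = w.2
      · obtain ⟨hd, hpc, hweq⟩ := procStep_write_eq hw
        refine ⟨t, by omega, hd, hpc, ?_, ?_⟩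
        · rw [hweq] at hcond; exact hcond.2.symm ▸ rfl
        · rw [hweq] at hcond; exact hcond.1.symm ▸ rfl
      · rw [if_neg hcond] at h'
        obtain ⟨s, hs, rest⟩ := ih h'
        exact ⟨s, by omega, rest⟩

/-- A live process at `pc = 2` writes its preference register at its next step. -/
lemma write_effect {N : ℕ} (input : Fin N → Bool) (sched : ℕ → Fin N) (t : ℕ)
    (hd : ((run input sched t).proc (sched t)).decided = none)
    (hpc : ((run input sched t).proc (sched t)).pc = 2) :
    (run input sched (t + 1)).reg ((run input sched t).proc (sched t)).pref
      ((run input sched t).proc (sched t)).round = true := by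
  rw [run_succ]
  show (match (procStep (run input sched t).reg ((run input sched t).proc (sched t))).2 with
      | some w => if _ ∧ _ then true else _
      | none => _) = true
  rw [show (procStep (run input sched t).reg ((run input sched t).proc (sched t))).2 =
      some (((run input sched t).proc (sched t)).pref,
        ((run input sched t).proc (sched t)).round) by
    unfold procStep
    rw [if_neg (by simp [hd]), if_neg (by omega), if_neg (by omega), if_pos hpc]]
  simp

end LCLB
namespace LCLB

noncomputable def Ttime {n : ℕ} (x : Fin n → ℕ → ℝ) (Δ0 : Fin n → ℝ)
    (i : Fin n) (j : ℕ) : ℝ :=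
  Δ0 i + ∑ k ∈ Finset.Icc 1 j, x i k

section Det

variable {n : ℕ} {input : Fin n → Bool} {sched : ℕ → Fin n}
  {x : Fin n → ℕ → ℝ} {Δ0 : Fin n → ℝ}

lemma Ttime_mono (hx : ∀ i k, 1 ≤ k → x i k = 1 ∨ x i k = 2) (i : Fin n) {j j' : ℕ}
    (h : j ≤ j') : Ttime x Δ0 i j ≤ Ttime x Δ0 i j' := by
  unfold Ttime
  have hsub : Finset.Icc 1 j ⊆ Finset.Icc 1 j' := Finset.Icc_subset_Icc_right h
  apply add_le_add_right
  apply Finset.sum_le_sum_of_subset_of_nonneg hsub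
  intro k hk _
  rcases hx i k (Finset.mem_Icc.1 hk).1 with h | h <;> rw [h] <;> norm_num

lemma Ttime_lb (hx : ∀ i k, 1 ≤ k → x i k = 1 ∨ x i k = 2) (i : Fin n) (j : ℕ) :
    Δ0 i + j ≤ Ttime x Δ0 i j := by
  unfold Ttime
  have h1 : ∑ k ∈ Finset.Icc 1 j, (1 : ℝ) ≤ ∑ k ∈ Finset.Icc 1 j, x i k :=
    Finset.sum_le_sum (fun k hk => by
      rcases hx i k (Finset.mem_Icc.1 hk).1 with h | h <;> rw [h] <;> norm_num)
  have h2 : ∑ k ∈ Finset.Icc 1 j, (1 : ℝ) = j := by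
    rw [Finset.sum_const, Nat.card_Icc]
    simp
  linarith

lemma Ttime_exact {P : Fin n} {J : ℕ} (hxP : ∀ k, 1 ≤ k → k ≤ J → x P k = 1)
    {j : ℕ} (hj : j ≤ J) : Ttime x Δ0 P j = Δ0 P + j := by
  unfold Ttime
  rw [Finset.sum_congr rfl (fun k hk => hxP k (Finset.mem_Icc.1 hk).1
    (le_trans (Finset.mem_Icc.1 hk).2 hj))]
  rw [Finset.sum_const, Nat.card_Icc]
  simp

lemma tau_mono (hC : ConsistentTotal (Ttime x Δ0) sched)
    (hx : ∀ i k, 1 ≤ k → x i k = 1 ∨ x i k = 2) {t t' : ℕ} (h : t ≤ t') :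
    Ttime x Δ0 (sched t) (opCountT sched (sched t) t + 1) ≤
      Ttime x Δ0 (sched t') (opCountT sched (sched t') t' + 1) := by
  induction t', h using Nat.le_induction with
  | base => exact le_refl _
  | succ t'' ht ih =>
    refine le_trans ih (le_trans (hC.1 t'' (sched (t'' + 1))) ?_)
    exact Ttime_mono hx _ (by
      have := opCountT_mono sched (sched (t'' + 1)) (Nat.le_add_right t'' 1)
      omega)

lemma sched_lt (hC : ConsistentTotal (Ttime x Δ0) sched)
    (hx : ∀ i k, 1 ≤ k → x i k = 1 ∨ x i k = 2) {s t : ℕ}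
    (h : Ttime x Δ0 (sched t) (opCountT sched (sched t) t + 1) <
         Ttime x Δ0 (sched s) (opCountT sched (sched s) s + 1)) : t < s := by
  by_contra h'
  push_neg at h'
  exact absurd (tau_mono hC hx h') (not_le.2 h)

/-- If the current operation's time is below `4r - 1`, then register `a_b[r]` cannot
have been written yet. -/
lemma reg_false_early (hC : ConsistentTotal (Ttime x Δ0) sched)
    (hx : ∀ i k, 1 ≤ k → x i k = 1 ∨ x i k = 2)
    (hΔ : ∀ i, 0 < Δ0 i ∧ Δ0 i < 1) {b : Bool} {r : ℕ} (hr : 1 ≤ r) {t : ℕ}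
    (htau : Ttime x Δ0 (sched t) (opCountT sched (sched t) t + 1) ≤ (4 * r : ℝ) - 1) :
    (run input sched t).reg b r = false := by
  by_contra h
  rw [Bool.not_eq_false] at h
  obtain ⟨s, hst, hd, hpc, hround, hpref⟩ := write_origin input sched hr t h
  obtain ⟨heq, -⟩ := run_inv input sched (sched s) s hd
  rw [hround, hpc] at heq
  have hlb := Ttime_lb hx (Δ0 := Δ0) (sched s) (opCountT sched (sched s) s + 1)
  have hmono := tau_mono hC hx (le_of_lt hst)
  have hΔw := hΔ (sched s)
  have hc : (opCountT sched (sched s) s : ℝ) + 1 = 4 * r - 1 := by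
    have h2 : opCountT sched (sched s) s + 2 = 4 * r := by omega
    have := congrArg (Nat.cast : ℕ → ℝ) h2
    push_cast at this
    linarith
  rw [Nat.cast_add, Nat.cast_one, hc] at hlb
  linarith

end Det

end LCLB
namespace LCLB

section Det

variable {n : ℕ} {input : Fin n → Bool} {sched : ℕ → Fin n}
  {x : Fin n → ℕ → ℝ} {Δ0 : Fin n → ℝ}

/-- One step of the synchronized-pair induction: process `P` (input `c`) whose partner
`O` has input `!c`, and both of which have all unit operation times through their first
`4R` operations, proceeds in lock step, never changing its preference and never
deciding, through its first `4R` operations. -/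
lemma pair_aux (hC : ConsistentTotal (Ttime x Δ0) sched)
    (hx : ∀ i k, 1 ≤ k → x i k = 1 ∨ x i k = 2)
    (hΔ : ∀ i, 0 < Δ0 i ∧ Δ0 i < 1)
    {R : ℕ} {P O : Fin n} {c : Bool} (hPin : input P = c)
    (hxP : ∀ k, 1 ≤ k → k ≤ 4 * R → x P k = 1)
    (hxO : ∀ k, 1 ≤ k → k ≤ 4 * R → x O k = 1)
    (j : ℕ) (hj : j ≤ 4 * R)
    (IHO : ∀ j', j' < j → ∀ t, opCountT sched O t = j' →
      (run input sched t).proc O = ⟨j' % 4, !c, j' / 4 + 1, false, none⟩) :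
    (∀ j', j' < j → ∀ t, opCountT sched P t = j' →
      (run input sched t).proc P = ⟨j' % 4, c, j' / 4 + 1, false, none⟩) →
    ∀ t, opCountT sched P t = j →
      (run input sched t).proc P = ⟨j % 4, c, j / 4 + 1, false, none⟩ := by
  intro IHP t ht
  rcases Nat.eq_zero_or_pos j with rfl | hjpos
  · have h0 : opCountT sched P 0 = 0 := by
      simp [opCountT]
    rw [proc_congr input sched P (t := 0) (t' := t) (by omega)]
    show (initConfig n input).proc P = _
    simp [initConfig, hPin]
  obtain ⟨j', rfl⟩ : ∃ j'', j = j'' + 1 := ⟨j - 1, by omega⟩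
  obtain ⟨t0, hst0, hcnt0⟩ := hC.2 P j'
  have hP0 : (run input sched t0).proc P = ⟨j' % 4, c, j' / 4 + 1, false, none⟩ :=
    IHP j' (by omega) t0 hcnt0
  have hcnt1 : opCountT sched P (t0 + 1) = j' + 1 := by
    rw [opCountT_succ, if_pos hst0, hcnt0]
  have hstep : (run input sched (t0 + 1)).proc P =
      (procStep (run input sched t0).reg ((run input sched t0).proc P)).1 := by
    have h := run_proc_self input sched t0
    rw [hst0] at h
    exact h
  have hfin : (run input sched t).proc P = (run input sched (t0 + 1)).proc P :=
    proc_congr input sched P (t := t0 + 1) (t' := t) (by omega)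
  rw [hfin, hstep, hP0]
  -- the time of the operation being performed at step t0
  have htau : Ttime x Δ0 (sched t0) (opCountT sched (sched t0) t0 + 1) =
      Δ0 P + (j' + 1 : ℕ) := by
    rw [hst0, hcnt0, Ttime_exact hxP (by omega)]
  have hΔP := hΔ P
  have hj4 : j' = 4 * (j' / 4) + j' % 4 := by omega
  have hjr : (j' : ℝ) = 4 * ((j' / 4 : ℕ) : ℝ) + ((j' % 4 : ℕ) : ℝ) := by
    exact_mod_cast congrArg (fun m : ℕ => (m : ℝ)) hj4
  have hmcases : j' % 4 = 0 ∨ j' % 4 = 1 ∨ j' % 4 = 2 ∨ j' % 4 = 3 := by omega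
  rcases hmcases with hm | hm | hm | hm
  -- pc = 0 : read a_0[r]
  · have hreg : (run input sched t0).reg false (j' / 4 + 1) = false := by
      apply reg_false_early hC hx hΔ (by omega)
      rw [htau]
      push_cast
      rw [hm] at hjr
      push_cast at hjr
      linarith [hΔP.1, hΔP.2]
    have e1 : (j' + 1) % 4 = 1 := by omega
    have e2 : (j' + 1) / 4 = j' / 4 := by omega
    rw [hm, e1, e2]
    simp [procStep, hreg]
  -- pc = 1 : read a_1[r]
  · have hreg : (run input sched t0).reg true (j' / 4 + 1) = false := by
      apply reg_false_early hC hx hΔ (by omega)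
      rw [htau]
      push_cast
      rw [hm] at hjr
      push_cast at hjr
      linarith [hΔP.1, hΔP.2]
    have e1 : (j' + 1) % 4 = 2 := by omega
    have e2 : (j' + 1) / 4 = j' / 4 := by omega
    rw [hm, e1, e2]
    simp [procStep, hreg]
  -- pc = 2 : write a_c[r]
  · have e1 : (j' + 1) % 4 = 3 := by omega
    have e2 : (j' + 1) / 4 = j' / 4 := by omega
    rw [hm, e1, e2]
    simp [procStep]
  -- pc = 3 : read a_{!c}[r-1]
  · have e1 : (j' + 1) % 4 = 0 := by omega
    have e2 : (j' + 1) / 4 = j' / 4 + 1 := by omega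
    rw [hm, e1, e2]
    rcases Nat.eq_zero_or_pos (j' / 4) with hq0 | hqpos
    · rw [hq0]
      have hreg : (run input sched t0).reg (!c) 0 = true := reg_zero input sched (!c) t0
      simp [procStep, hreg]
    · obtain ⟨q'', hq''⟩ : ∃ q'', j' / 4 = q'' + 1 := ⟨j' / 4 - 1, by omega⟩
      obtain ⟨t1, hst1, hcnt1O⟩ := hC.2 O (4 * q'' + 2)
      have hO1 : (run input sched t1).proc O =
          ⟨(4 * q'' + 2) % 4, !c, (4 * q'' + 2) / 4 + 1, false, none⟩ :=
        IHO (4 * q'' + 2) (by omega) t1 hcnt1O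
      have em1 : (4 * q'' + 2) % 4 = 2 := by omega
      have em2 : (4 * q'' + 2) / 4 + 1 = q'' + 1 := by omega
      rw [em1, em2] at hO1
      have hdO : ((run input sched t1).proc (sched t1)).decided = none := by
        rw [hst1, hO1]
      have hpcO : ((run input sched t1).proc (sched t1)).pc = 2 := by
        rw [hst1, hO1]
      have hw := write_effect input sched t1 hdO hpcO
      rw [hst1, hO1] at hw
      dsimp only at hw
      have ht1time : Ttime x Δ0 (sched t1) (opCountT sched (sched t1) t1 + 1) =
          Δ0 O + ((4 * q'' + 2 : ℕ) + 1 : ℕ) := by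
        rw [hst1, hcnt1O, Ttime_exact hxO (by omega)]
      have hlt : t1 < t0 := by
        apply sched_lt hC hx
        rw [htau, ht1time]
        have hΔO := hΔ O
        rw [hm] at hjr
        push_cast
        push_cast at hjr
        have hqr : ((j' / 4 : ℕ) : ℝ) = (q'' : ℝ) + 1 := by exact_mod_cast hq''
        linarith [hΔO.1, hΔO.2, hΔP.1]
      have hregO : (run input sched t0).reg (!c) (j' / 4) = true := by
        rw [hq'']
        exact reg_mono input sched (by omega : t1 + 1 ≤ t0) hw
      simp [procStep, hregO]

end Det

end LCLB
namespace LCLB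

section Det

variable {n : ℕ} {input : Fin n → Bool} {sched : ℕ → Fin n}
  {x : Fin n → ℕ → ℝ} {Δ0 : Fin n → ℝ}

lemma pair_state (hC : ConsistentTotal (Ttime x Δ0) sched)
    (hx : ∀ i k, 1 ≤ k → x i k = 1 ∨ x i k = 2)
    (hΔ : ∀ i, 0 < Δ0 i ∧ Δ0 i < 1)
    {R : ℕ} {A B : Fin n} (hA : input A = false) (hB : input B = true)
    (hxA : ∀ k, 1 ≤ k → k ≤ 4 * R → x A k = 1)
    (hxB : ∀ k, 1 ≤ k → k ≤ 4 * R → x B k = 1) :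
    ∀ j, j ≤ 4 * R →
      (∀ t, opCountT sched A t = j →
        (run input sched t).proc A = ⟨j % 4, false, j / 4 + 1, false, none⟩) ∧
      (∀ t, opCountT sched B t = j →
        (run input sched t).proc B = ⟨j % 4, true, j / 4 + 1, false, none⟩) := by
  intro j
  induction j using Nat.strong_induction_on with
  | _ j ih =>
    intro hj
    constructor
    · refine pair_aux hC hx hΔ hA hxA hxB j hj ?_ ?_
      · intro j' hj' t ht
        exact (ih j' hj' (by omega)).2 t ht
      · intro j' hj' t ht
        exact (ih j' hj' (by omega)).1 t ht
    · refine pair_aux hC hx hΔ hB hxB hxA j hj ?_ ?_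
      · intro j' hj' t ht
        exact (ih j' hj' (by omega)).1 t ht
      · intro j' hj' t ht
        exact (ih j' hj' (by omega)).2 t ht

/-- The deterministic core of the lower bound: if some pair of processes with opposite
inputs both have all-unit operation times through their first `4R` operations, then no
process decides before round `R + 2`. -/
lemma det_bound (hC : ConsistentTotal (Ttime x Δ0) sched)
    (hx : ∀ i k, 1 ≤ k → x i k = 1 ∨ x i k = 2)
    (hΔ : ∀ i, 0 < Δ0 i ∧ Δ0 i < 1)
    {R : ℕ} {A B : Fin n} (hA : input A = false) (hB : input B = true)
    (hxA : ∀ k, 1 ≤ k → k ≤ 4 * R → x A k = 1)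
    (hxB : ∀ k, 1 ≤ k → k ≤ 4 * R → x B k = 1) :
    (R : ℝ≥0∞) ≤ firstDecisionRound input sched := by
  refine le_sInf ?_
  rintro b ⟨q, t, i, rfl, hnone, hsome, hround⟩
  have hq : R ≤ q := by
    by_contra hlt
    push_neg at hlt
    -- the decision step must be a step of process i
    have hsch : sched t = i := by
      by_contra hne
      rw [run_proc_ne input sched hne] at hsome
      exact hsome hnone
    rw [← hsch] at hnone hsome hround
    rw [run_proc_self input sched t] at hsome
    obtain ⟨hpc0, hpc1, hpc2, hregf, -⟩ := procStep_decide hnone hsome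
    obtain ⟨heq, hpc3⟩ := run_inv input sched (sched t) t hnone
    have hpc : ((run input sched t).proc (sched t)).pc = 3 := by omega
    rw [hround] at heq
    -- q ≥ 1
    have hq1 : 1 ≤ q := by omega
    rcases Nat.eq_or_lt_of_le hq1 with hq1' | hq2
    · -- round 1 : register a_*[0] is always 1
      rw [hround, ← hq1'] at hregf
      rw [reg_zero input sched _ t] at hregf
      exact Bool.true_eq_false.mp hregf
    · -- 2 ≤ q ≤ R + 1 (indeed q < R so q - 1 < R ≤ R)
      obtain ⟨r, hr⟩ : ∃ r, q = r + 2 := ⟨q - 2, by omega⟩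
      -- both registers of round q - 1 = r + 1 were written by A and B before time 4q
      have hwrites : ∀ (W : Fin n) (cw : Bool), input W = cw →
          (∀ k, 1 ≤ k → k ≤ 4 * R → x W k = 1) →
          (run input sched t).reg cw (r + 1) = true := by
        intro W cw hWin hxW
        obtain ⟨t1, hst1, hcnt1⟩ := hC.2 W (4 * r + 2)
        have hW1 : (run input sched t1).proc W =
            ⟨(4 * r + 2) % 4, cw, (4 * r + 2) / 4 + 1, false, none⟩ := by
          rcases Bool.eq_false_or_eq_true cw with hcw | hcw
          · rw [hcw] at hWin ⊢
            exact (pair_state hC hx hΔ hA hWin hxA hxW (4 * r + 2) (by omega)).2 t1 hcnt1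
          · rw [hcw] at hWin ⊢
            exact (pair_state hC hx hΔ hWin hB hxW hxB (4 * r + 2) (by omega)).1 t1 hcnt1
        have em1 : (4 * r + 2) % 4 = 2 := by omega
        have em2 : (4 * r + 2) / 4 + 1 = r + 1 := by omega
        rw [em1, em2] at hW1
        have hdW : ((run input sched t1).proc (sched t1)).decided = none := by
          rw [hst1, hW1]
        have hpcW : ((run input sched t1).proc (sched t1)).pc = 2 := by
          rw [hst1, hW1]
        have hw := write_effect input sched t1 hdW hpcW
        rw [hst1, hW1] at hw
        dsimp only at hw
        have ht1time : Ttime x Δ0 (sched t1) (opCountT sched (sched t1) t1 + 1) =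
            Δ0 W + ((4 * r + 2 : ℕ) + 1 : ℕ) := by
          rw [hst1, hcnt1, Ttime_exact hxW (by omega)]
        have hlt1 : t1 < t := by
          apply sched_lt hC hx
          have hlb := Ttime_lb hx (Δ0 := Δ0) (sched t) (opCountT sched (sched t) t + 1)
          have hcnteq : opCountT sched (sched t) t + 1 = 4 * q := by omega
          rw [ht1time]
          rw [hcnteq] at hlb ⊢
          have hΔW := hΔ W
          have hΔi := hΔ (sched t)
          have : ((4 * q : ℕ) : ℝ) = 4 * (q : ℝ) := by push_cast; ring
          rw [this] at hlb
          have hqr : (q : ℝ) = (r : ℝ) + 2 := by exact_mod_cast hr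
          push_cast
          linarith [hΔW.1, hΔW.2, hΔi.1]
        exact reg_mono input sched (by omega : t1 + 1 ≤ t) hw
      -- contradiction with the decision read
      have hfA : (run input sched t).reg false (r + 1) = true := hwrites A false hA hxA
      have hfB : (run input sched t).reg true (r + 1) = true := hwrites B true hB hxB
      rw [hround] at hregf
      have hq1' : q - 1 = r + 1 := by omega
      rw [hq1'] at hregf
      rcases Bool.eq_false_or_eq_true (!((run input sched t).proc (sched t)).pref) with
        hb | hb <;> rw [hb] at hregf
      · rw [hfB] at hregf
        exact Bool.true_eq_false.mp hregf
      · rw [hfA] at hregf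
        exact Bool.true_eq_false.mp hregf
  exact_mod_cast Nat.cast_le.mpr hq

end Det

end LCLB
namespace LCLB

open MeasureTheory

/-- Bonferroni-type lower bound (stated addition-only, to live comfortably in `ℝ≥0∞`). -/
lemma bonferroni {Ω : Type} [MeasurableSpace Ω] (μ : Measure Ω)
    {ι : Type} [DecidableEq ι] (E : ι → Set Ω) (q : ℝ≥0∞)
    (hmeas : ∀ i, MeasurableSet (E i))
    (hq : ∀ i, q ≤ μ (E i)) (hpair : ∀ i j, i ≠ j → μ (E i ∩ E j) ≤ q * q)
    (s : Finset ι) :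
    (s.card : ℝ≥0∞) * q ≤
      μ (⋃ i ∈ s, E i) + (s.card : ℝ≥0∞) * (s.card : ℝ≥0∞) * (q * q) := by
  induction s using Finset.induction_on with
  | empty => simp
  | @insert a s ha ih =>
    rw [Finset.card_insert_of_notMem ha]
    have hUm : MeasurableSet (⋃ i ∈ s, E i) :=
      s.measurableSet_biUnion (fun i _ => hmeas i)
    have hkey : μ (E a ∪ ⋃ i ∈ s, E i) + μ (E a ∩ ⋃ i ∈ s, E i) =
        μ (E a) + μ (⋃ i ∈ s, E i) := measure_union_add_inter (E a) hUm
    have hint : μ (E a ∩ ⋃ i ∈ s, E i) ≤ (s.card : ℝ≥0∞) * (q * q) := by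
      have hsub : E a ∩ ⋃ i ∈ s, E i ⊆ ⋃ i ∈ s, (E a ∩ E i) := by
        rintro ω ⟨h1, h2⟩
        rw [Set.mem_iUnion₂] at h2 ⊢
        obtain ⟨i, hi, h2⟩ := h2
        exact ⟨i, hi, h1, h2⟩
      refine le_trans (measure_mono hsub)
        (le_trans (measure_biUnion_finset_le s _) ?_)
      calc ∑ i ∈ s, μ (E a ∩ E i) ≤ ∑ _i ∈ s, q * q :=
            Finset.sum_le_sum (fun i hi => hpair a i (fun h => ha (h ▸ hi)))
        _ = (s.card : ℝ≥0∞) * (q * q) := by rw [Finset.sum_const, nsmul_eq_mul]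
    have hunion : (⋃ i ∈ insert a s, E i) = E a ∪ ⋃ i ∈ s, E i := by
      simp [Finset.set_biUnion_insert]
    rw [hunion]
    push_cast
    have step1 : ((s.card : ℝ≥0∞) + 1) * q = q + (s.card : ℝ≥0∞) * q := by ring
    rw [step1]
    have hc : (s.card : ℝ≥0∞) + (s.card : ℝ≥0∞) * (s.card : ℝ≥0∞) ≤
        ((s.card : ℝ≥0∞) + 1) * ((s.card : ℝ≥0∞) + 1) := by
      have hn : (s.card + s.card * s.card : ℕ) ≤ (s.card + 1) * (s.card + 1) := by nlinarith
      calc (s.card : ℝ≥0∞) + (s.card : ℝ≥0∞) * (s.card : ℝ≥0∞)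
          = ((s.card + s.card * s.card : ℕ) : ℝ≥0∞) := by push_cast; ring
        _ ≤ (((s.card + 1) * (s.card + 1) : ℕ) : ℝ≥0∞) := Nat.cast_le.mpr hn
        _ = ((s.card : ℝ≥0∞) + 1) * ((s.card : ℝ≥0∞) + 1) := by push_cast; ring
    calc q + (s.card : ℝ≥0∞) * q
        ≤ μ (E a) + (μ (⋃ i ∈ s, E i) +
            (s.card : ℝ≥0∞) * (s.card : ℝ≥0∞) * (q * q)) := add_le_add (hq a) ih
      _ = (μ (E a) + μ (⋃ i ∈ s, E i)) +
            (s.card : ℝ≥0∞) * (s.card : ℝ≥0∞) * (q * q) := by ring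
      _ = (μ (E a ∪ ⋃ i ∈ s, E i) + μ (E a ∩ ⋃ i ∈ s, E i)) +
            (s.card : ℝ≥0∞) * (s.card : ℝ≥0∞) * (q * q) := by rw [hkey]
      _ ≤ μ (E a ∪ ⋃ i ∈ s, E i) + ((s.card : ℝ≥0∞) * (q * q) +
            (s.card : ℝ≥0∞) * (s.card : ℝ≥0∞) * (q * q)) := by
          rw [add_assoc]
          exact add_le_add_right (add_le_add_left hint _) _
      _ ≤ μ (E a ∪ ⋃ i ∈ s, E i) +
            ((s.card : ℝ≥0∞) + 1) * ((s.card : ℝ≥0∞) + 1) * (q * q) := by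
          refine add_le_add_right ?_ _
          calc (s.card : ℝ≥0∞) * (q * q) + (s.card : ℝ≥0∞) * (s.card : ℝ≥0∞) * (q * q)
              = ((s.card : ℝ≥0∞) + (s.card : ℝ≥0∞) * (s.card : ℝ≥0∞)) * (q * q) := by
                ring
            _ ≤ _ := mul_le_mul_left hc _

end LCLB

/-- the `Ω(log n)` lower bound.  There is a noise distribution (each
operation takes `1` or `2` time units with probability `1/2` each, independently) and a
choice of adversary delays (all `Δ i j = 0` for `j ≥ 1`, starting offsets `Δ0 i` distinct
values in `(0,1)`) such that lean-consensus requires expected `Ω(log n)` rounds in the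
noisy scheduling model without failures: there is a universal constant `κ > 0` such that
for all sufficiently large even `n`, if `n/2` processes start with input `0` and `n/2`
with input `1`, then in executions scheduled consistently with the random operation
times `Δ0 i + ∑_{k=1}^j X i k`, the expected round at which the first process decides is
at least `κ log n`. -/
theorem lean_consensus_lower_bound :
    ∃ κ : ℝ, 0 < κ ∧ ∃ n₀ : ℕ, ∀ n : ℕ, n₀ ≤ n → Even n →
      ∀ (Ω : Type) (_ : MeasurableSpace Ω) (μ : Measure Ω), IsProbabilityMeasure μ →
      ∀ (X : Fin n → ℕ → Ω → ℝ) (Δ0 : Fin n → ℝ) (input : Fin n → Bool)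
        (sched : Ω → ℕ → Fin n),
      (∀ i j, Measurable (X i j)) →
      iIndepFun (fun p : Fin n × ℕ => X p.1 (p.2 + 1)) μ →
      (∀ (i : Fin n) (k : ℕ), 1 ≤ k →
        μ {ω | X i k ω = 1} = 1 / 2 ∧ μ {ω | X i k ω = 2} = 1 / 2) →
      Function.Injective Δ0 →
      (∀ i, 0 < Δ0 i ∧ Δ0 i < 1) →
      ((Finset.univ.filter fun i => input i = true).card = n / 2) →
      (∀ ω, ConsistentTotal
        (fun i j => Δ0 i + ∑ k ∈ Finset.Icc 1 j, X i k ω) (sched ω)) →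
      ENNReal.ofReal (κ * Real.log n) ≤
        ∫⁻ ω, firstDecisionRound input (sched ω) ∂μ := by
  classical
  refine ⟨1 / 12288, by norm_num, 2, ?_⟩
  intro n hn2 heven Ω mΩ μ hprob X Δ0 input sched hXmeas hindep hdist hinj hΔ hinput hcons
  set R : ℕ := Nat.clog 2 n / 8 + 1 with hR
  set M : ℕ := n / 2 with hM
  -- arithmetic facts about R
  have hneven : n % 2 = 0 := Nat.even_iff.mp heven
  have hnpow : n ≤ 2 ^ (8 * R) :=
    le_trans (Nat.le_pow_clog (by norm_num) n)
      (Nat.pow_le_pow_right (by norm_num) (by omega))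
  have hclog2 : 2 ^ Nat.clog 2 n ≤ 2 * n := by
    have h1 := Nat.pow_pred_clog_lt_self (b := 2) (by norm_num) (x := n) (by omega)
    have h2 : 2 ^ Nat.clog 2 n ≤ 2 * 2 ^ (Nat.clog 2 n).pred := by
      rcases Nat.eq_zero_or_pos (Nat.clog 2 n) with h0 | h0
      · rw [h0]; norm_num
      · have hpp : (Nat.clog 2 n).pred + 1 = Nat.clog 2 n := Nat.succ_pred_eq_of_pos h0
        have hps := pow_succ 2 (Nat.clog 2 n).pred
        rw [hpp] at hps
        omega
    omega
  have hpow512 : 2 ^ (8 * R) ≤ 512 * n := by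
    have h8 : 8 * R ≤ Nat.clog 2 n + 8 := by omega
    calc 2 ^ (8 * R) ≤ 2 ^ (Nat.clog 2 n + 8) := Nat.pow_le_pow_right (by norm_num) h8
      _ = 256 * 2 ^ Nat.clog 2 n := by rw [pow_add]; ring
      _ ≤ 256 * (2 * n) := Nat.mul_le_mul_left _ hclog2
      _ = 512 * n := by ring
  -- choice of the pairs
  set Zs : Finset (Fin n) := Finset.univ.filter (fun i : Fin n => input i = false) with hZs
  set Os : Finset (Fin n) := Finset.univ.filter (fun i : Fin n => input i = true) with hOs
  have hOcard : Os.card = M := hinput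
  have hZOcard : Zs.card + Os.card = n := by
    rw [hZs, hOs, add_comm]
    have : Finset.univ.filter (fun i : Fin n => input i = false) =
        Finset.univ.filter (fun i : Fin n => ¬(input i = true)) := by
      apply Finset.filter_congr
      intro i _
      simp
    rw [this, Finset.card_filter_add_card_filter_not, Finset.card_univ,
      Fintype.card_fin]
  have hZcard : Zs.card = M := by omega
  set A : Fin M → Fin n := fun m => ((Zs.orderIsoOfFin hZcard) m : Fin n) with hA
  set B : Fin M → Fin n := fun m => ((Os.orderIsoOfFin hOcard) m : Fin n) with hB
  have hAin : ∀ m, input (A m) = false := by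
    intro m
    have hmem := ((Zs.orderIsoOfFin hZcard) m).2
    exact (Finset.mem_filter.1 hmem).2
  have hBin : ∀ m, input (B m) = true := by
    intro m
    have hmem := ((Os.orderIsoOfFin hOcard) m).2
    exact (Finset.mem_filter.1 hmem).2
  have hAinj : Function.Injective A := fun m m' h =>
    (Zs.orderIsoOfFin hZcard).injective (Subtype.ext h)
  have hBinj : Function.Injective B := fun m m' h =>
    (Os.orderIsoOfFin hOcard).injective (Subtype.ext h)
  have hAB : ∀ m m', A m ≠ B m' := by
    intro m m' h
    have h1 := hAin m
    rw [h, hBin m'] at h1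
    exact absurd h1 (by simp)
  -- the events
  set f : Fin n × ℕ → Set Ω := fun p => {ω | X p.1 (p.2 + 1) ω = 1} with hf
  set Sm : Fin M → Finset (Fin n × ℕ) :=
    fun m => ({A m, B m} : Finset (Fin n)) ×ˢ Finset.range (4 * R) with hSm
  set E : Fin M → Set Ω := fun m => ⋂ p ∈ Sm m, f p with hE
  have hfmeas : ∀ p, MeasurableSet (f p) := by
    intro p
    have : f p = X p.1 (p.2 + 1) ⁻¹' {1} := by
      ext ω; simp [hf]
    rw [this]
    exact (hXmeas p.1 (p.2 + 1)) (measurableSet_singleton 1)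
  have hfprob : ∀ p : Fin n × ℕ, μ (f p) = 1 / 2 := fun p =>
    (hdist p.1 (p.2 + 1) (by omega)).1
  have hEmeas : ∀ m, MeasurableSet (E m) :=
    fun m => (Sm m).measurableSet_biInter (fun p _ => hfmeas p)
  have hprod : ∀ S : Finset (Fin n × ℕ), μ (⋂ p ∈ S, f p) = (1 / 2 : ℝ≥0∞) ^ S.card := by
    intro S
    rw [hindep.meas_biInter (fun p _ =>
      ⟨{1}, measurableSet_singleton 1, by ext ω; simp [hf]⟩)]
    rw [Finset.prod_congr rfl (fun p _ => hfprob p), Finset.prod_const]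
  set q : ℝ≥0∞ := (1 / 2 : ℝ≥0∞) ^ (8 * R) with hq
  have hcardSm : ∀ m, (Sm m).card = 8 * R := by
    intro m
    rw [hSm]
    simp only []
    rw [Finset.card_product, Finset.card_range,
      Finset.card_insert_of_notMem (by simp [hAB m m]), Finset.card_singleton]
    ring
  have hEq : ∀ m, μ (E m) = q := by
    intro m
    rw [hE]
    simp only []
    rw [hprod, hcardSm]
  have hSdisj : ∀ m m', m ≠ m' → Disjoint (Sm m) (Sm m') := by
    intro m m' hne
    rw [Finset.disjoint_left]
    rintro ⟨i, k⟩ hp hp'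
    rw [hSm] at hp hp'
    simp only [Finset.mem_product, Finset.mem_insert, Finset.mem_singleton] at hp hp'
    rcases hp.1 with h1 | h1 <;> rcases hp'.1 with h2 | h2
    · exact hne (hAinj (h1 ▸ h2))
    · exact hAB m m' (h1 ▸ h2)
    · exact hAB m' m (h2 ▸ h1)
    · exact hne (hBinj (h1 ▸ h2))
  have hEpair : ∀ m m', m ≠ m' → μ (E m ∩ E m') = q * q := by
    intro m m' hne
    have hun : E m ∩ E m' = ⋂ p ∈ Sm m ∪ Sm m', f p := by
      rw [hE]
      simp only []
      ext ω
      simp only [Set.mem_inter_iff, Set.mem_iInter, Finset.mem_union]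
      constructor
      · rintro ⟨h1, h2⟩ p hp
        rcases hp with hp | hp
        exacts [h1 p hp, h2 p hp]
      · intro h
        exact ⟨fun p hp => h p (Or.inl hp), fun p hp => h p (Or.inr hp)⟩
    rw [hun, hprod, Finset.card_union_of_disjoint (hSdisj m m' hne), hcardSm, hcardSm,
      hq, ← pow_add]
  -- numeric bounds on M * q
  have h2ne0 : ((2 : ℝ≥0∞) ^ (8 * R)) ≠ 0 := pow_ne_zero _ (by norm_num)
  have h2netop : ((2 : ℝ≥0∞) ^ (8 * R)) ≠ ⊤ := ENNReal.pow_ne_top ENNReal.ofNat_ne_top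
  have hqinv : (2 : ℝ≥0∞) ^ (8 * R) * q = 1 := by
    rw [hq, one_div, ← ENNReal.inv_pow]
    exact ENNReal.mul_inv_cancel h2ne0 h2netop
  have hcastpow : ((2 ^ (8 * R) : ℕ) : ℝ≥0∞) = (2 : ℝ≥0∞) ^ (8 * R) := by push_cast; ring
  have hub : (M : ℝ≥0∞) * q ≤ 1 / 2 := by
    rw [ENNReal.le_div_iff_mul_le (Or.inl (by norm_num)) (Or.inl ENNReal.ofNat_ne_top)]
    calc (M : ℝ≥0∞) * q * 2 = ((2 * M : ℕ) : ℝ≥0∞) * q := by push_cast; ring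
      _ ≤ ((2 ^ (8 * R) : ℕ) : ℝ≥0∞) * q :=
          mul_le_mul_left (Nat.cast_le.mpr (by omega)) q
      _ = (2 : ℝ≥0∞) ^ (8 * R) * q := by rw [hcastpow]
      _ = 1 := hqinv
  have hlb : (1 : ℝ≥0∞) / 1024 ≤ (M : ℝ≥0∞) * q := by
    rw [ENNReal.div_le_iff_le_mul (Or.inl (by norm_num)) (Or.inl (by norm_num))]
    calc (1 : ℝ≥0∞) = (2 : ℝ≥0∞) ^ (8 * R) * q := hqinv.symm
      _ ≤ ((512 * n : ℕ) : ℝ≥0∞) * q := by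
          rw [← hcastpow]
          exact mul_le_mul_left (Nat.cast_le.mpr hpow512) q
      _ = (M : ℝ≥0∞) * q * 1024 := by
          have h5 : (512 * n : ℕ) = 1024 * M := by omega
          rw [h5]; push_cast; ring
  -- Bonferroni
  have hbon := LCLB.bonferroni μ E q hEmeas (fun m => (hEq m).ge)
    (fun i j h => (hEpair i j h).le) Finset.univ
  rw [Finset.card_univ, Fintype.card_fin] at hbon
  set U : Set Ω := ⋃ m ∈ (Finset.univ : Finset (Fin M)), E m with hU
  have hUmeas : MeasurableSet U := Finset.measurableSet_biUnion _ (fun m _ => hEmeas m)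
  have hMq_ne_top : (M : ℝ≥0∞) * q ≠ ⊤ := (lt_of_le_of_lt hub (by norm_num)).ne
  have hμU : (M : ℝ≥0∞) * q / 2 ≤ μ U := by
    have h1 : (M : ℝ≥0∞) * (M : ℝ≥0∞) * (q * q) ≤ (M : ℝ≥0∞) * q / 2 := by
      have he : (M : ℝ≥0∞) * (M : ℝ≥0∞) * (q * q) =
          ((M : ℝ≥0∞) * q) * ((M : ℝ≥0∞) * q) := by ring
      rw [he]
      calc ((M : ℝ≥0∞) * q) * ((M : ℝ≥0∞) * q) ≤ (1 / 2) * ((M : ℝ≥0∞) * q) :=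
            mul_le_mul_left hub _
        _ = (M : ℝ≥0∞) * q / 2 := by
            rw [one_div, ENNReal.div_eq_inv_mul]
    have h2 : (M : ℝ≥0∞) * q ≤ μ U + (M : ℝ≥0∞) * q / 2 :=
      le_trans hbon (add_le_add_right h1 _)
    have h3 : (M : ℝ≥0∞) * q - (M : ℝ≥0∞) * q / 2 ≤ μ U := tsub_le_iff_right.mpr h2
    rwa [ENNReal.sub_half hMq_ne_top] at h3
  have hμU' : (1 : ℝ≥0∞) / 2048 ≤ μ U := by
    refine le_trans ?_ hμU
    have h2048 : (1 : ℝ≥0∞) / 2048 = (1 / 1024) / 2 := by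
      rw [one_div, one_div, div_eq_mul_inv, ← ENNReal.mul_inv (Or.inl (by norm_num))
        (Or.inl (by norm_num))]
      norm_num
    rw [h2048]
    exact ENNReal.div_le_div_right hlb 2
  -- the almost-sure event that all durations are 1 or 2
  set G : Set Ω := ⋂ (i : Fin n), ⋂ (k : ℕ),
    {ω | X i (k + 1) ω = 1 ∨ X i (k + 1) ω = 2} with hG
  have hm1 : ∀ (i : Fin n) (k : ℕ), MeasurableSet {ω | X i (k + 1) ω = 1} := by
    intro i k
    have : {ω | X i (k + 1) ω = 1} = X i (k + 1) ⁻¹' {1} := by ext ω; simp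
    rw [this]
    exact (hXmeas i (k + 1)) (measurableSet_singleton 1)
  have hm2 : ∀ (i : Fin n) (k : ℕ), MeasurableSet {ω | X i (k + 1) ω = 2} := by
    intro i k
    have : {ω | X i (k + 1) ω = 2} = X i (k + 1) ⁻¹' {2} := by ext ω; simp
    rw [this]
    exact (hXmeas i (k + 1)) (measurableSet_singleton 2)
  have hsetsplit : ∀ (i : Fin n) (k : ℕ), {ω | X i (k + 1) ω = 1 ∨ X i (k + 1) ω = 2} =
      {ω | X i (k + 1) ω = 1} ∪ {ω | X i (k + 1) ω = 2} := by
    intro i k; ext ω; simp [Set.mem_union]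
  have hGmeas : MeasurableSet G := by
    refine MeasurableSet.iInter (fun i => MeasurableSet.iInter (fun k => ?_))
    rw [hsetsplit]
    exact (hm1 i k).union (hm2 i k)
  have hGcompl : μ Gᶜ = 0 := by
    rw [hG, Set.compl_iInter]
    refine measure_iUnion_null (fun i => ?_)
    rw [Set.compl_iInter]
    refine measure_iUnion_null (fun k => ?_)
    have hd1 := (hdist i (k + 1) (by omega)).1
    have hd2 := (hdist i (k + 1) (by omega)).2
    have hdisj : Disjoint {ω | X i (k + 1) ω = 1} {ω | X i (k + 1) ω = 2} := by
      rw [Set.disjoint_left]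
      intro ω h1 h2
      simp only [Set.mem_setOf_eq] at h1 h2
      rw [h1] at h2
      norm_num at h2
    have huni : μ ({ω | X i (k + 1) ω = 1} ∪ {ω | X i (k + 1) ω = 2}) = 1 := by
      rw [measure_union hdisj (hm2 i k), hd1, hd2]
      exact ENNReal.add_halves 1
    rw [hsetsplit, measure_compl ((hm1 i k).union (hm2 i k)) (measure_ne_top μ _),
      measure_univ, huni, tsub_self]
  set Sev : Set Ω := U ∩ G with hSev
  have hSevmeas : MeasurableSet Sev := hUmeas.inter hGmeas
  have hμSev : (1 : ℝ≥0∞) / 2048 ≤ μ Sev := by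
    refine le_trans hμU' ?_
    have hsub : U ⊆ Sev ∪ Gᶜ := by
      intro ω hω
      by_cases hg : ω ∈ G
      · exact Or.inl ⟨hω, hg⟩
      · exact Or.inr hg
    calc μ U ≤ μ (Sev ∪ Gᶜ) := measure_mono hsub
      _ ≤ μ Sev + μ Gᶜ := measure_union_le _ _
      _ = μ Sev := by rw [hGcompl, add_zero]
  -- pointwise lower bound on the event
  have hpt : ∀ ω ∈ Sev, (R : ℝ≥0∞) ≤ firstDecisionRound input (sched ω) := by
    rintro ω ⟨hωU, hωG⟩
    have hωU' : ∃ m, ω ∈ E m := by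
      rw [hU] at hωU
      simpa using hωU
    obtain ⟨m, hωE⟩ := hωU'
    have hxall : ∀ (i : Fin n) (k : ℕ), 1 ≤ k → X i k ω = 1 ∨ X i k ω = 2 := by
      intro i k hk
      obtain ⟨k', rfl⟩ : ∃ k', k = k' + 1 := ⟨k - 1, by omega⟩
      exact Set.mem_iInter.1 (Set.mem_iInter.1 hωG i) k'
    rw [hE] at hωE
    simp only [Set.mem_iInter] at hωE
    have hmemE : ∀ p ∈ Sm m, X p.1 (p.2 + 1) ω = 1 := fun p hp => hωE p hp
    have hxA : ∀ k, 1 ≤ k → k ≤ 4 * R → X (A m) k ω = 1 := by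
      intro k h1 h2
      obtain ⟨k', rfl⟩ : ∃ k', k = k' + 1 := ⟨k - 1, by omega⟩
      refine hmemE (A m, k') ?_
      rw [hSm]
      simp only [Finset.mem_product, Finset.mem_insert, Finset.mem_singleton,
        Finset.mem_range]
      exact ⟨Or.inl trivial, by omega⟩
    have hxB : ∀ k, 1 ≤ k → k ≤ 4 * R → X (B m) k ω = 1 := by
      intro k h1 h2
      obtain ⟨k', rfl⟩ : ∃ k', k = k' + 1 := ⟨k - 1, by omega⟩
      refine hmemE (B m, k') ?_
      rw [hSm]
      simp only [Finset.mem_product, Finset.mem_insert, Finset.mem_singleton,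
        Finset.mem_range]
      exact ⟨Or.inr trivial, by omega⟩
    exact LCLB.det_bound (x := fun i k => X i k ω) (Δ0 := Δ0) (hcons ω) hxall hΔ
      (hAin m) (hBin m) hxA hxB
  -- the logarithmic bound
  have hlogle : Real.log n ≤ (6 : ℝ) * R := by
    have hn0 : (0 : ℝ) < n := by positivity
    have h1 : (n : ℝ) ≤ (2 : ℝ) ^ (Nat.clog 2 n) := by
      exact_mod_cast Nat.le_pow_clog (by norm_num) n
    have h2 : Real.log n ≤ Real.log ((2 : ℝ) ^ (Nat.clog 2 n)) :=
      Real.log_le_log hn0 h1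
    rw [Real.log_pow] at h2
    have h3 : Real.log 2 ≤ 0.7 :=
      le_of_lt (lt_of_lt_of_le Real.log_two_lt_d9 (by norm_num))
    have h4 : (Nat.clog 2 n : ℝ) ≤ 8 * R := by
      exact_mod_cast (by omega : Nat.clog 2 n ≤ 8 * R)
    have h5 : (0 : ℝ) ≤ (Nat.clog 2 n : ℝ) := Nat.cast_nonneg _
    have h6 : (Nat.clog 2 n : ℝ) * Real.log 2 ≤ (Nat.clog 2 n : ℝ) * 0.7 :=
      mul_le_mul_of_nonneg_left h3 h5
    have h7 : (Nat.clog 2 n : ℝ) * 0.7 ≤ (8 * R) * 0.7 :=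
      mul_le_mul_of_nonneg_right h4 (by norm_num)
    linarith
  calc ENNReal.ofReal (1 / 12288 * Real.log n)
      ≤ ENNReal.ofReal ((R : ℝ) * (1 / 2048)) := by
        apply ENNReal.ofReal_le_ofReal
        linarith
    _ = (R : ℝ≥0∞) * ENNReal.ofReal (1 / 2048) := by
        rw [ENNReal.ofReal_mul (by positivity), ENNReal.ofReal_natCast]
    _ = (R : ℝ≥0∞) * (1 / 2048) := by
        congr 1
        rw [ENNReal.ofReal_div_of_pos (by norm_num), ENNReal.ofReal_one,
          ENNReal.ofReal_ofNat]
    _ ≤ (R : ℝ≥0∞) * μ Sev := mul_le_mul_right hμSev _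
    _ = ∫⁻ ω, Sev.indicator (fun _ => (R : ℝ≥0∞)) ω ∂μ :=
        (lintegral_indicator_const hSevmeas _).symm
    _ ≤ ∫⁻ ω, firstDecisionRound input (sched ω) ∂μ := by
        refine lintegral_mono (fun ω => ?_)
        by_cases hω : ω ∈ Sev
        · rw [Set.indicator_of_mem hω]
          exact hpt ω hω
        · rw [Set.indicator_of_notMem hω]
          exact zero_le
end
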